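/- arXiv:math/0512524 — 2 statements merged into one kernel-verified Lean document; each statement's English description precedes it below -/
import Mathlib

section
/- Let U be a sub-Markovian resolvent of kernels and ξ a U-excessive measure. Let f be measurable, strictly positive with ξ(f)<∞, and write ξ_d = ξ|_{[Uf<∞]} and ξ_c = ξ|_{[Uf=∞]}. Then ξ = ξ_d + ξ_c, and for every α>0 the sets [Uf<∞] and [Uf=∞] are such that U_α(1_{[Uf=∞]}) = 0 on [Uf<∞]; in particular ξ_d and ξ_c are each U-excessive. -/
open MeasureTheory ProbabilityTheory ENNReal Set Filter
open Topology

variable {E : Type*} [MeasurableSpace E]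

/-- The action of the kernel `U α` on nonnegative measurable functions. -/
noncomputable def resOp (U : ℝ → ProbabilityTheory.Kernel E E) (α : ℝ)
    (f : E → ℝ≥0∞) (x : E) : ℝ≥0∞ := ∫⁻ y, f y ∂(U α x)

/-- A sub-Markovian resolvent of kernels: `α U_α 1 ≤ 1` and the resolvent equation
`U_α = U_β + (β-α) U_α U_β` for `0 < α ≤ β`. -/
def IsSubMarkovResolvent (U : ℝ → ProbabilityTheory.Kernel E E) : Prop :=
  (∀ α : ℝ, 0 < α → ∀ x : E, ENNReal.ofReal α * (U α x) Set.univ ≤ 1) ∧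
  (∀ α β : ℝ, 0 < α → α ≤ β → ∀ f : E → ℝ≥0∞, Measurable f → ∀ x : E,
    resOp U α f x = resOp U β f x + ENNReal.ofReal (β - α) * resOp U α (resOp U β f) x)

/-- The initial kernel `U = sup_{α>0} U_α` acting on functions. -/
noncomputable def iniOp (U : ℝ → ProbabilityTheory.Kernel E E) (f : E → ℝ≥0∞) (x : E) : ℝ≥0∞ :=
  ⨆ (α : ℝ) (_ : 0 < α), resOp U α f x

/-- `s` is `U`-supermedian: `α U_α s ≤ s` for all `α > 0`. -/
def IsSupermedian (U : ℝ → ProbabilityTheory.Kernel E E) (s : E → ℝ≥0∞) : Prop :=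
  ∀ α : ℝ, 0 < α → ∀ x, ENNReal.ofReal α * resOp U α s x ≤ s x

/-- The regularization `ŝ(x) = sup_{α>0} α U_α s (x)`. -/
noncomputable def hatOp (U : ℝ → ProbabilityTheory.Kernel E E) (s : E → ℝ≥0∞) (x : E) : ℝ≥0∞ :=
  ⨆ (α : ℝ) (_ : 0 < α), ENNReal.ofReal α * resOp U α s x

/-- `s` is `U`-excessive: supermedian and `sup_{α>0} α U_α s = s`. -/
def IsExcessiveFn (U : ℝ → ProbabilityTheory.Kernel E E) (s : E → ℝ≥0∞) : Prop :=
  IsSupermedian U s ∧ ∀ x, hatOp U s x = s x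

/-- The shifted resolvent `U_β = (U_{β+α})_{α>0}`. -/
def shiftRes (U : ℝ → ProbabilityTheory.Kernel E E) (β : ℝ) :
    ℝ → ProbabilityTheory.Kernel E E := fun α => U (β + α)

/-- `ξ` is a `U`-excessive measure: `ξ ∘ (α U_α) ≤ ξ` for all `α > 0`. -/
def IsExcessiveMeas (U : ℝ → ProbabilityTheory.Kernel E E) (ξ : Measure E) : Prop :=
  ∀ α : ℝ, 0 < α → ENNReal.ofReal α • ξ.bind (U α) ≤ ξ

/-- The measure `μ ∘ U`, where `U` is the initial kernel `sup_{α>0} U_α`. -/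
noncomputable def potMeas (U : ℝ → ProbabilityTheory.Kernel E E) (μ : Measure E) : Measure E :=
  ⨆ (α : ℝ) (_ : 0 < α), μ.bind (U α)

/-- `ξ` is purely excessive: excessive and `inf_{α>0} ξ ∘ (α U_α) = 0`. -/
def IsPurelyExcessiveMeas (U : ℝ → ProbabilityTheory.Kernel E E) (ξ : Measure E) : Prop :=
  IsExcessiveMeas U ξ ∧ ∀ s : Set E, MeasurableSet s →
    (⨅ (α : ℝ) (_ : 0 < α), (ENNReal.ofReal α • ξ.bind (U α)) s) = 0

/-- The set of non-branch points with respect to `U`. -/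
def nonBranch (U : ℝ → ProbabilityTheory.Kernel E E) : Set E :=
  {x | (∀ s t : E → ℝ≥0∞, IsExcessiveFn U s → IsExcessiveFn U t →
      hatOp U (fun y => min (s y) (t y)) x = min (s x) (t x)) ∧
    hatOp U (fun _ => (1 : ℝ≥0∞)) x = 1}

namespace DCD

variable (U : ℝ → ProbabilityTheory.Kernel E E)

lemma measurable_resOp (α : ℝ) {g : E → ℝ≥0∞} (hg : Measurable g) :
    Measurable (resOp U α g) :=
  (Measure.measurable_lintegral hg).comp (U α).measurable

lemma resOp_mono (α : ℝ) {g h : E → ℝ≥0∞} (hgh : ∀ y, g y ≤ h y) (x : E) :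
    resOp U α g x ≤ resOp U α h x := lintegral_mono hgh

lemma resOp_add (α : ℝ) {g h : E → ℝ≥0∞} (hg : Measurable g) (x : E) :
    resOp U α (fun y => g y + h y) x = resOp U α g x + resOp U α h x :=
  lintegral_add_left hg _

lemma resOp_cmul (α : ℝ) (c : ℝ≥0∞) {g : E → ℝ≥0∞} (hg : Measurable g) (x : E) :
    resOp U α (fun y => c * g y) x = c * resOp U α g x :=
  lintegral_const_mul c hg

lemma resOp_tsum (α : ℝ) {g : ℕ → E → ℝ≥0∞} (hg : ∀ n, Measurable (g n)) (x : E) :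
    resOp U α (fun y => ∑' n, g n y) x = ∑' n, resOp U α (g n) x :=
  lintegral_tsum (fun n => (hg n).aemeasurable)

lemma resOp_iSup (α : ℝ) {g : ℕ → E → ℝ≥0∞} (hg : ∀ n, Measurable (g n))
    (hmono : Monotone g) (x : E) :
    resOp U α (fun y => ⨆ n, g n y) x = ⨆ n, resOp U α (g n) x :=
  lintegral_iSup hg hmono

lemma resOp_le_const (hU : IsSubMarkovResolvent U) {α : ℝ} (hα : 0 < α)
    {g : E → ℝ≥0∞} {c : ℝ≥0∞} (hc : ∀ y, g y ≤ c) (x : E) :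
    resOp U α g x ≤ c * (ENNReal.ofReal α)⁻¹ := by
  calc resOp U α g x ≤ ∫⁻ _, c ∂(U α x) := lintegral_mono hc
  _ = c * (U α x) Set.univ := by rw [lintegral_const]
  _ ≤ c * (ENNReal.ofReal α)⁻¹ := by
      gcongr
      rw [ENNReal.le_inv_iff_mul_le, mul_comm]
      exact hU.1 α hα x


noncomputable def itR (α : ℝ) (g : E → ℝ≥0∞) : ℕ → E → ℝ≥0∞
  | 0 => g
  | n+1 => resOp U α (itR α g n)

lemma measurable_itR (α : ℝ) {g : E → ℝ≥0∞} (hg : Measurable g) (n : ℕ) :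
    Measurable (itR U α g n) := by
  induction n with
  | zero => exact hg
  | succ n ih => exact measurable_resOp U α ih

lemma itR_mono (α : ℝ) {g h : E → ℝ≥0∞} (hgh : ∀ y, g y ≤ h y) (n : ℕ) (x : E) :
    itR U α g n x ≤ itR U α h n x := by
  induction n generalizing x with
  | zero => exact hgh x
  | succ n ih => exact resOp_mono U α (fun y => ih y) x

lemma itR_le_const (hU : IsSubMarkovResolvent U) {α : ℝ} (hα : 0 < α)
    {g : E → ℝ≥0∞} {c : ℝ≥0∞} (hc : ∀ y, g y ≤ c) (n : ℕ) (x : E) :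
    itR U α g n x ≤ c * ((ENNReal.ofReal α)⁻¹) ^ n := by
  induction n generalizing x with
  | zero => simpa [itR] using hc x
  | succ n ih =>
      calc itR U α g (n+1) x ≤ (c * ((ENNReal.ofReal α)⁻¹) ^ n) * (ENNReal.ofReal α)⁻¹ :=
            resOp_le_const U hU hα (fun y => ih y) x
      _ = c * ((ENNReal.ofReal α)⁻¹) ^ (n+1) := by ring

/-- The series `∑ αⁿ U_α^{n+1} g`. -/
noncomputable def SSer (α : ℝ) (g : E → ℝ≥0∞) : E → ℝ≥0∞ :=
  fun x => ∑' n, (ENNReal.ofReal α) ^ n * itR U α g (n+1) x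

lemma measurable_SSer (α : ℝ) {g : E → ℝ≥0∞} (hg : Measurable g) :
    Measurable (SSer U α g) :=
  Measurable.ennreal_tsum fun n => (measurable_itR U α hg (n+1)).const_mul _

/-- Iterated resolvent equation. -/
lemma resOp_recursion (hU : IsSubMarkovResolvent U) {γ α : ℝ} (hγ : 0 < γ) (hγα : γ ≤ α)
    {g : E → ℝ≥0∞} (hg : Measurable g) (N : ℕ) (x : E) :
    resOp U γ g x
      = (∑ n ∈ Finset.range (N+1), (ENNReal.ofReal (α - γ)) ^ n * itR U α g (n+1) x)
        + (ENNReal.ofReal (α - γ)) ^ (N+1) * resOp U γ (itR U α g (N+1)) x := by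
  induction N with
  | zero =>
      simpa [itR, pow_one] using hU.2 γ α hγ hγα g hg x
  | succ N ih =>
      rw [ih]
      have hbase := hU.2 γ α hγ hγα (itR U α g (N+1)) (measurable_itR U α hg (N+1)) x
      have : resOp U α (itR U α g (N+1)) = itR U α g (N+2) := rfl
      rw [this] at hbase
      rw [hbase, Finset.sum_range_succ _ (N+1)]
      ring

lemma resOp_anti (hU : IsSubMarkovResolvent U) {γ α : ℝ} (hγ : 0 < γ) (hγα : γ ≤ α)
    {g : E → ℝ≥0∞} (hg : Measurable g) (x : E) :
    resOp U α g x ≤ resOp U γ g x := by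
  rw [hU.2 γ α hγ hγα g hg x]; exact le_self_add


lemma sup_min_nat (a : ℝ≥0∞) : ⨆ j : ℕ, min a (j : ℝ≥0∞) = a := by
  apply le_antisymm (iSup_le fun j => min_le_left _ _)
  rcases eq_or_ne a ⊤ with ha | ha
  · subst ha
    refine le_of_forall_lt fun c hc => ?_
    rw [lt_iSup_iff]
    obtain ⟨n, hn⟩ := ENNReal.exists_nat_gt hc.ne_top
    exact ⟨n, by rw [min_eq_right le_top]; exact hn⟩
  · obtain ⟨n, hn⟩ := ENNReal.exists_nat_gt ha
    exact le_iSup_of_le n (le_min le_rfl hn.le)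

lemma resOp_le_SSer (hU : IsSubMarkovResolvent U) {α : ℝ} (hα : 0 < α)
    {f : E → ℝ≥0∞} (hf : Measurable f) {γ : ℝ} (hγ : 0 < γ) (x : E) :
    resOp U γ f x ≤ SSer U α f x := by
  rcases le_or_gt α γ with hαγ | hγα
  · -- γ ≥ α : resOp U γ f ≤ resOp U α f ≤ first term of series
    refine (resOp_anti U hU hα hαγ hf x).trans ?_
    have h0 : resOp U α f x = (ENNReal.ofReal α) ^ 0 * itR U α f 1 x := by simp [itR]
    rw [h0]
    exact ENNReal.le_tsum 0
  · -- γ < α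
    have hminmeas : ∀ j : ℕ, Measurable fun y => min (f y) (j : ℝ≥0∞) :=
      fun j => hf.min measurable_const
    have hmono : Monotone fun (j : ℕ) (y : E) => min (f y) (j : ℝ≥0∞) := by
      intro j k hjk y
      exact min_le_min le_rfl (by exact_mod_cast Nat.cast_le.2 hjk)
    have hrw : resOp U γ f x = ⨆ j : ℕ, resOp U γ (fun y => min (f y) (j : ℝ≥0∞)) x := by
      rw [← resOp_iSup U γ hminmeas hmono x]
      congr 1; ext y; rw [sup_min_nat]
    rw [hrw]
    refine iSup_le fun j => ?_
    -- fixed truncation level j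
    set c := ENNReal.ofReal (α - γ) with hc
    have hαne0 : ENNReal.ofReal α ≠ 0 := (ENNReal.ofReal_pos.2 hα).ne'
    have hγne0 : ENNReal.ofReal γ ≠ 0 := (ENNReal.ofReal_pos.2 hγ).ne'
    have hinvαne0 : (ENNReal.ofReal α)⁻¹ ≠ 0 := ENNReal.inv_ne_zero.2 ENNReal.ofReal_ne_top
    have hinvαnetop : (ENNReal.ofReal α)⁻¹ ≠ ⊤ := ENNReal.inv_ne_top.2 hαne0
    have hρ : c * (ENNReal.ofReal α)⁻¹ < 1 := by
      have hlt : c < ENNReal.ofReal α := by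
        rw [hc, ENNReal.ofReal_lt_ofReal_iff hα]; linarith
      calc c * (ENNReal.ofReal α)⁻¹ < ENNReal.ofReal α * (ENNReal.ofReal α)⁻¹ :=
            ENNReal.mul_lt_mul_left hinvαne0 hinvαnetop hlt
      _ = 1 := ENNReal.mul_inv_cancel hαne0 ENNReal.ofReal_ne_top
    set ρ := c * (ENNReal.ofReal α)⁻¹ with hρdef
    set K := (j : ℝ≥0∞) * (ENNReal.ofReal γ)⁻¹ with hK
    have hKne : K ≠ ⊤ := by
      rw [hK]
      exact ENNReal.mul_ne_top (by simp) (ENNReal.inv_ne_top.2 hγne0)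
    have hbound : ∀ N : ℕ,
        resOp U γ (fun y => min (f y) (j : ℝ≥0∞)) x ≤ SSer U α f x + K * ρ ^ (N+1) := by
      intro N
      rw [resOp_recursion U hU hγ hγα.le (hminmeas j) N x]
      refine add_le_add ?_ ?_
      · -- main sum ≤ SSer
        calc (∑ n ∈ Finset.range (N+1), c ^ n * itR U α (fun y => min (f y) (j:ℝ≥0∞)) (n+1) x)
            ≤ ∑ n ∈ Finset.range (N+1), (ENNReal.ofReal α) ^ n * itR U α f (n+1) x := by
              refine Finset.sum_le_sum fun n _ => ?_
              gcongr
              · exact ENNReal.ofReal_le_ofReal (by linarith)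
              · exact itR_mono U α (fun y => min_le_left _ _) (n+1) x
          _ ≤ SSer U α f x := ENNReal.sum_le_tsum _
      · -- remainder
        have h1 : ∀ y, itR U α (fun y => min (f y) (j:ℝ≥0∞)) (N+1) y
            ≤ (j : ℝ≥0∞) * ((ENNReal.ofReal α)⁻¹) ^ (N+1) :=
          itR_le_const U hU hα (fun y => min_le_right _ _) (N+1)
        have h2 : resOp U γ (itR U α (fun y => min (f y) (j:ℝ≥0∞)) (N+1)) x
            ≤ ((j : ℝ≥0∞) * ((ENNReal.ofReal α)⁻¹) ^ (N+1)) * (ENNReal.ofReal γ)⁻¹ :=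
          resOp_le_const U hU hγ h1 x
        calc c ^ (N+1) * resOp U γ (itR U α (fun y => min (f y) (j:ℝ≥0∞)) (N+1)) x
            ≤ c ^ (N+1) * (((j : ℝ≥0∞) * ((ENNReal.ofReal α)⁻¹) ^ (N+1)) * (ENNReal.ofReal γ)⁻¹) := by
              gcongr
          _ = K * ρ ^ (N+1) := by rw [hρdef, hK, mul_pow]; ring
    have htend : Tendsto (fun N : ℕ => SSer U α f x + K * ρ ^ (N+1)) atTop (𝓝 (SSer U α f x)) := by
      have t1 : Tendsto (fun N : ℕ => ρ ^ (N+1)) atTop (𝓝 0) :=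
        (ENNReal.tendsto_pow_atTop_nhds_zero_of_lt_one hρ).comp (tendsto_add_atTop_nat 1)
      have t2 : Tendsto (fun N : ℕ => K * ρ ^ (N+1)) atTop (𝓝 0) := by
        have := ENNReal.Tendsto.const_mul (a := K) t1 (Or.inr hKne)
        simpa using this
      have t3 := Tendsto.const_add (SSer U α f x) t2
      simpa using t3
    exact ge_of_tendsto htend (Eventually.of_forall hbound)

lemma iniOp_le_SSer (hU : IsSubMarkovResolvent U) {α : ℝ} (hα : 0 < α)
    {f : E → ℝ≥0∞} (hf : Measurable f) (x : E) :
    iniOp U f x ≤ SSer U α f x :=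
  iSup₂_le fun γ hγ => resOp_le_SSer U hU hα hf hγ x

lemma SSer_le_iniOp (hU : IsSubMarkovResolvent U) {α : ℝ} (hα : 0 < α)
    {f : E → ℝ≥0∞} (hf : Measurable f) (x : E) :
    SSer U α f x ≤ iniOp U f x := by
  rw [SSer, ENNReal.tsum_eq_iSup_nat]
  refine iSup_le fun N => ?_
  -- partial sum over range N
  have key : ∀ j : ℕ,
      (∑ n ∈ Finset.range N, (ENNReal.ofReal α) ^ n * itR U α f (n+1) x)
        ≤ ENNReal.ofReal ((α / (α - α/(j+2))) ^ N) * iniOp U f x := by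
    intro j
    set γ := α / (j + 2 : ℝ) with hγdef
    have hj2 : (0:ℝ) < (j:ℝ) + 2 := by positivity
    have hγpos : 0 < γ := by rw [hγdef]; positivity
    have hγlt : γ < α := by
      rw [hγdef, div_lt_iff₀ hj2]
      nlinarith
    have hd : (0:ℝ) < α - γ := by linarith
    set c := ENNReal.ofReal (α - γ) with hcdef
    have hterm : ∀ n ∈ Finset.range N,
        (ENNReal.ofReal α) ^ n * itR U α f (n+1) x
          ≤ ENNReal.ofReal ((α/(α-γ))^N) * (c ^ n * itR U α f (n+1) x) := by
      intro n hn
      rw [← mul_assoc]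
      gcongr
      have hreal : α ^ n ≤ (α/(α-γ))^N * (α-γ)^n := by
        have h1 : α ^ n = (α/(α-γ))^n * (α-γ)^n := by
          rw [div_pow, div_mul_cancel₀]
          exact pow_ne_zero _ hd.ne'
        rw [h1]
        have hratio : (1:ℝ) ≤ α/(α-γ) := by
          rw [le_div_iff₀ hd]; linarith
        have : (α/(α-γ))^n ≤ (α/(α-γ))^N :=
          pow_le_pow_right₀ hratio (Finset.mem_range.1 hn).le
        nlinarith [pow_nonneg hd.le n, pow_nonneg (le_trans zero_le_one hratio) n]
      calc (ENNReal.ofReal α) ^ n = ENNReal.ofReal (α ^ n) := (ENNReal.ofReal_pow hα.le n).symm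
        _ ≤ ENNReal.ofReal ((α/(α-γ))^N * (α-γ)^n) := ENNReal.ofReal_le_ofReal hreal
        _ = ENNReal.ofReal ((α/(α-γ))^N) * c ^ n := by
            rw [ENNReal.ofReal_mul (by positivity), ENNReal.ofReal_pow hd.le]
    calc (∑ n ∈ Finset.range N, (ENNReal.ofReal α) ^ n * itR U α f (n+1) x)
        ≤ ∑ n ∈ Finset.range N, ENNReal.ofReal ((α/(α-γ))^N) * (c ^ n * itR U α f (n+1) x) :=
          Finset.sum_le_sum hterm
      _ = ENNReal.ofReal ((α/(α-γ))^N) * ∑ n ∈ Finset.range N, c ^ n * itR U α f (n+1) x := by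
          rw [Finset.mul_sum]
      _ ≤ ENNReal.ofReal ((α/(α-γ))^N) * iniOp U f x := by
          gcongr
          have hsum : (∑ n ∈ Finset.range N, c ^ n * itR U α f (n+1) x)
              ≤ resOp U γ f x := by
            rw [resOp_recursion U hU hγpos hγlt.le hf N x]
            refine le_add_right ?_
            exact Finset.sum_le_sum_of_subset (Finset.range_subset_range.2 (by omega))
          exact hsum.trans (le_iSup₂ (f := fun (β : ℝ) (_ : 0 < β) => resOp U β f x) γ hγpos)
  -- let j → ∞
  have htendγ : Tendsto (fun j : ℕ => α / ((j:ℝ) + 2)) atTop (𝓝 0) := by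
    have h1 : Tendsto (fun j : ℕ => (j:ℝ) + 2) atTop atTop :=
      tendsto_atTop_add_const_right atTop 2 tendsto_natCast_atTop_atTop
    have h2 := h1.inv_tendsto_atTop
    have h3 := h2.const_mul α
    simpa [div_eq_mul_inv, mul_zero] using h3
  have htendratio : Tendsto (fun j : ℕ => (α / (α - α/((j:ℝ)+2))) ^ N) atTop (𝓝 1) := by
    have h1 : Tendsto (fun j : ℕ => α - α/((j:ℝ)+2)) atTop (𝓝 α) := by
      have := (tendsto_const_nhds (x := α) (f := atTop (α := ℕ))).sub htendγ
      simpa using this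
    have h2 : Tendsto (fun j : ℕ => α / (α - α/((j:ℝ)+2))) atTop (𝓝 1) := by
      have := (tendsto_const_nhds (x := α) (f := atTop (α := ℕ))).div h1 hα.ne'
      simpa [Pi.div_def, div_self hα.ne'] using this
    have := h2.pow N
    simpa using this
  have htendm : Tendsto (fun j : ℕ =>
      ENNReal.ofReal ((α / (α - α/((j:ℝ)+2))) ^ N) * iniOp U f x) atTop
      (𝓝 (iniOp U f x)) := by
    have h1 := ENNReal.tendsto_ofReal htendratio
    have h2 := ENNReal.Tendsto.mul_const (b := iniOp U f x) h1 (Or.inl (by simp))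
    simpa using h2
  exact ge_of_tendsto htendm (Eventually.of_forall key)

lemma iniOp_eq_SSer (hU : IsSubMarkovResolvent U) {α : ℝ} (hα : 0 < α)
    {f : E → ℝ≥0∞} (hf : Measurable f) (x : E) :
    iniOp U f x = SSer U α f x :=
  le_antisymm (iniOp_le_SSer U hU hα hf x) (SSer_le_iniOp U hU hα hf x)


lemma le_inv_nat_zero {X c : ℝ≥0∞} (hc : c ≠ ⊤)
    (h : ∀ j : ℕ, X ≤ ((j : ℝ≥0∞) + 1)⁻¹ * c) : X = 0 := by
  by_contra hX
  have hXc : ∀ j : ℕ, X * ((j : ℝ≥0∞) + 1) ≤ c := by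
    intro j
    have hj0 : ((j : ℝ≥0∞) + 1) ≠ 0 := by simp
    have hjt : ((j : ℝ≥0∞) + 1) ≠ ⊤ := by simp [ENNReal.add_ne_top]
    calc X * ((j : ℝ≥0∞) + 1) ≤ (((j : ℝ≥0∞) + 1)⁻¹ * c) * ((j : ℝ≥0∞) + 1) :=
          mul_le_mul_left (h j) _
    _ = c * (((j : ℝ≥0∞) + 1)⁻¹ * ((j : ℝ≥0∞) + 1)) := by ring
    _ = c := by rw [ENNReal.inv_mul_cancel hj0 hjt, mul_one]
  have htop : (⨆ j : ℕ, X * ((j : ℝ≥0∞) + 1)) = ⊤ := by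
    rw [← mul_iSup]
    have : (⨆ j : ℕ, ((j : ℝ≥0∞) + 1)) = ⊤ := by
      refine eq_top_iff.2 (le_of_forall_lt fun b hb => ?_)
      rw [lt_iSup_iff]
      obtain ⟨n, hn⟩ := ENNReal.exists_nat_gt hb.ne_top
      exact ⟨n, hn.trans_le le_self_add⟩
    rw [this, ENNReal.mul_top hX]
  have : (⊤ : ℝ≥0∞) ≤ c := htop ▸ iSup_le hXc
  exact hc (top_le_iff.1 this)

lemma itR_succ (α : ℝ) (g : E → ℝ≥0∞) (n : ℕ) :
    itR U α g (n+1) = resOp U α (itR U α g n) := rfl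

lemma resOp_SSer_le (hU : IsSubMarkovResolvent U) {α : ℝ} (hα : 0 < α)
    {f : E → ℝ≥0∞} (hf : Measurable f) (x : E) :
    resOp U α (SSer U α f) x ≤ (ENNReal.ofReal α)⁻¹ * SSer U α f x := by
  have hαne0 : ENNReal.ofReal α ≠ 0 := (ENNReal.ofReal_pos.2 hα).ne'
  have h1 : resOp U α (SSer U α f) x
      = ∑' n, (ENNReal.ofReal α) ^ n * itR U α f (n+2) x := by
    have hS : SSer U α f = fun y => ∑' n, (ENNReal.ofReal α) ^ n * itR U α f (n+1) y := rfl
    rw [hS, resOp_tsum U α (fun n => (measurable_itR U α hf (n+1)).const_mul _) x]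
    congr 1
    ext n
    rw [resOp_cmul U α _ (measurable_itR U α hf (n+1)) x, ← itR_succ]
  rw [h1]
  have h2 : ∑' n, (ENNReal.ofReal α) ^ (n+1) * itR U α f (n+2) x ≤ SSer U α f x := by
    have hS2 : SSer U α f x = ∑' n, (ENNReal.ofReal α) ^ n * itR U α f (n+1) x := rfl
    rw [hS2, tsum_eq_zero_add' (f := fun n => (ENNReal.ofReal α) ^ n * itR U α f (n+1) x) ENNReal.summable]
    exact self_le_add_left _ _
  calc (∑' n, (ENNReal.ofReal α) ^ n * itR U α f (n+2) x)
      = ∑' n, (ENNReal.ofReal α)⁻¹ * ((ENNReal.ofReal α) ^ (n+1) * itR U α f (n+2) x) := by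
        congr 1; ext n
        rw [← mul_assoc, pow_succ']
        rw [← mul_assoc, ENNReal.inv_mul_cancel hαne0 ENNReal.ofReal_ne_top, one_mul]
    _ = (ENNReal.ofReal α)⁻¹ * ∑' n, (ENNReal.ofReal α) ^ (n+1) * itR U α f (n+2) x :=
        ENNReal.tsum_mul_left
    _ ≤ (ENNReal.ofReal α)⁻¹ * SSer U α f x := by gcongr

/-- Pointwise absorption: from a point of `[Uf < ∞]`, the kernel does not charge
`[Uf = ∞]`. -/
lemma absorb (hU : IsSubMarkovResolvent U) {α : ℝ} (hα : 0 < α)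
    {f : E → ℝ≥0∞} (hf : Measurable f) {x : E} (hx : iniOp U f x < ⊤) :
    resOp U α ({x | iniOp U f x < ⊤}ᶜ.indicator 1) x = 0 := by
  have hEq : iniOp U f = SSer U α f := funext (iniOp_eq_SSer U hU hα hf)
  have hCx : (ENNReal.ofReal α)⁻¹ * SSer U α f x ≠ ⊤ := by
    refine ENNReal.mul_ne_top (ENNReal.inv_ne_top.2 (ENNReal.ofReal_pos.2 hα).ne') ?_
    rw [← hEq]
    exact hx.ne
  refine le_inv_nat_zero hCx fun j => ?_
  have hbound : ∀ y, ({x | iniOp U f x < ⊤}ᶜ.indicator 1) y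
      ≤ ((j : ℝ≥0∞) + 1)⁻¹ * SSer U α f y := by
    intro y
    by_cases hy : y ∈ {x | iniOp U f x < ⊤}ᶜ
    · rw [Set.indicator_of_mem hy]
      have hytop : SSer U α f y = ⊤ := by
        rw [← hEq]
        simp only [Set.mem_compl_iff, Set.mem_setOf_eq, not_lt, top_le_iff] at hy
        exact hy
      rw [hytop, ENNReal.mul_top (by simp)]
      exact le_top
    · rw [Set.indicator_of_notMem hy]
      exact zero_le
  calc resOp U α ({x | iniOp U f x < ⊤}ᶜ.indicator 1) x
      ≤ resOp U α (fun y => ((j : ℝ≥0∞) + 1)⁻¹ * SSer U α f y) x :=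
        resOp_mono U α hbound x
    _ = ((j : ℝ≥0∞) + 1)⁻¹ * resOp U α (SSer U α f) x :=
        resOp_cmul U α _ (measurable_SSer U α hf) x
    _ ≤ ((j : ℝ≥0∞) + 1)⁻¹ * ((ENNReal.ofReal α)⁻¹ * SSer U α f x) := by
        gcongr
        exact resOp_SSer_le U hU hα hf x


/-! ### The sub-Markov operator `T = α U_α` and its potential theory -/

noncomputable def Tk (α : ℝ) (g : E → ℝ≥0∞) : E → ℝ≥0∞ :=
  fun x => ENNReal.ofReal α * resOp U α g x

lemma measurable_Tk (α : ℝ) {g : E → ℝ≥0∞} (hg : Measurable g) :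
    Measurable (Tk U α g) := (measurable_resOp U α hg).const_mul _

lemma Tk_mono (α : ℝ) {g h : E → ℝ≥0∞} (hgh : ∀ y, g y ≤ h y) (x : E) :
    Tk U α g x ≤ Tk U α h x := mul_le_mul_right (resOp_mono U α hgh x) _

lemma Tk_add (α : ℝ) {g h : E → ℝ≥0∞} (hg : Measurable g) (x : E) :
    Tk U α (fun y => g y + h y) x = Tk U α g x + Tk U α h x := by
  rw [Tk, resOp_add U α hg x, mul_add]; rfl

lemma Tk_cmul (α : ℝ) (c : ℝ≥0∞) {g : E → ℝ≥0∞} (hg : Measurable g) (x : E) :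
    Tk U α (fun y => c * g y) x = c * Tk U α g x := by
  rw [Tk, resOp_cmul U α c hg x]; rw [Tk]; ring

lemma Tk_sum (α : ℝ) {g : ℕ → E → ℝ≥0∞} (hg : ∀ n, Measurable (g n)) (s : Finset ℕ) (x : E) :
    Tk U α (fun y => ∑ j ∈ s, g j y) x = ∑ j ∈ s, Tk U α (g j) x := by
  rw [Tk]
  have : resOp U α (fun y => ∑ j ∈ s, g j y) x = ∑ j ∈ s, resOp U α (g j) x :=
    lintegral_finset_sum s (fun j _ => hg j)
  rw [this, Finset.mul_sum]; rfl

lemma Tk_one_le (hU : IsSubMarkovResolvent U) {α : ℝ} (hα : 0 < α) (x : E) :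
    Tk U α (fun _ => 1) x ≤ 1 := by
  rw [Tk]
  have : resOp U α (fun _ => (1:ℝ≥0∞)) x = (U α x) Set.univ := lintegral_one
  rw [this]
  exact hU.1 α hα x

lemma Tk_le_one (hU : IsSubMarkovResolvent U) {α : ℝ} (hα : 0 < α)
    {g : E → ℝ≥0∞} (hg1 : ∀ y, g y ≤ 1) (x : E) : Tk U α g x ≤ 1 :=
  (Tk_mono U α hg1 x).trans (Tk_one_le U hU hα x)

lemma Tk_split (α : ℝ) {g : E → ℝ≥0∞} (B : Set E) (hgB : Measurable (B.indicator g)) (x : E) :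
    Tk U α g x = Tk U α (B.indicator g) x + Tk U α (Bᶜ.indicator g) x := by
  have hg : g = fun y => B.indicator g y + Bᶜ.indicator g y := by
    ext y
    exact (congrFun (Set.indicator_self_add_compl B g) y).symm
  conv_lhs => rw [hg]
  exact Tk_add U α hgB x

noncomputable def TkIt (α : ℝ) (g : E → ℝ≥0∞) : ℕ → E → ℝ≥0∞
  | 0 => g
  | n+1 => Tk U α (TkIt α g n)

lemma measurable_TkIt (α : ℝ) {g : E → ℝ≥0∞} (hg : Measurable g) (n : ℕ) :
    Measurable (TkIt U α g n) := by
  induction n with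
  | zero => exact hg
  | succ n ih => exact measurable_Tk U α ih

lemma TkIt_mono (α : ℝ) {g h : E → ℝ≥0∞} (hgh : ∀ y, g y ≤ h y) (n : ℕ) (x : E) :
    TkIt U α g n x ≤ TkIt U α h n x := by
  induction n generalizing x with
  | zero => exact hgh x
  | succ n ih => exact Tk_mono U α (fun y => ih y) x

lemma TkIt_cmul (α : ℝ) (c : ℝ≥0∞) {g : E → ℝ≥0∞} (hg : Measurable g) (n : ℕ) :
    TkIt U α (fun y => c * g y) n = fun x => c * TkIt U α g n x := by
  induction n with
  | zero => rfl
  | succ n ih =>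
      have : TkIt U α (fun y => c * g y) (n+1) = Tk U α (TkIt U α (fun y => c * g y) n) := rfl
      rw [this, ih]
      ext x
      exact Tk_cmul U α c (measurable_TkIt U α hg n) x

lemma TkIt_eq_pow (α : ℝ) {f : E → ℝ≥0∞} (hf : Measurable f) (n : ℕ) :
    TkIt U α f n = fun x => (ENNReal.ofReal α) ^ n * itR U α f n x := by
  induction n with
  | zero => simp [TkIt, itR]
  | succ n ih =>
      have h1 : TkIt U α f (n+1) = Tk U α (TkIt U α f n) := rfl
      rw [h1, ih]
      ext x
      rw [Tk_cmul U α _ (measurable_itR U α hf n) x]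
      rw [Tk, itR_succ]
      ring

noncomputable def Gp (α : ℝ) (g : E → ℝ≥0∞) : E → ℝ≥0∞ := fun x => ∑' n, TkIt U α g n x

lemma measurable_Gp (α : ℝ) {g : E → ℝ≥0∞} (hg : Measurable g) :
    Measurable (Gp U α g) :=
  Measurable.ennreal_tsum fun n => measurable_TkIt U α hg n

lemma Gp_mono (α : ℝ) {g h : E → ℝ≥0∞} (hgh : ∀ y, g y ≤ h y) (x : E) :
    Gp U α g x ≤ Gp U α h x :=
  ENNReal.tsum_le_tsum fun n => TkIt_mono U α hgh n x

lemma Gp_cmul (α : ℝ) (c : ℝ≥0∞) {g : E → ℝ≥0∞} (hg : Measurable g) (x : E) :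
    Gp U α (fun y => c * g y) x = c * Gp U α g x := by
  rw [Gp, Gp]
  calc (∑' n, TkIt U α (fun y => c * g y) n x)
      = ∑' n, c * TkIt U α g n x := by
        congr 1; ext n; rw [TkIt_cmul U α c hg n]
    _ = c * ∑' n, TkIt U α g n x := ENNReal.tsum_mul_left

lemma Gp_eq (hU : IsSubMarkovResolvent U) {α : ℝ} (hα : 0 < α)
    {f : E → ℝ≥0∞} (hf : Measurable f) (x : E) :
    Gp U α f x = f x + ENNReal.ofReal α * SSer U α f x := by
  rw [Gp]
  rw [tsum_eq_zero_add' (f := fun n => TkIt U α f n x) ENNReal.summable]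
  have h0 : TkIt U α f 0 x = f x := rfl
  rw [h0]
  congr 1
  calc (∑' n, TkIt U α f (n+1) x)
      = ∑' n, (ENNReal.ofReal α) * ((ENNReal.ofReal α) ^ n * itR U α f (n+1) x) := by
        congr 1; ext n
        rw [TkIt_eq_pow U α hf (n+1)]
        rw [pow_succ']
        ring
    _ = ENNReal.ofReal α * SSer U α f x := ENNReal.tsum_mul_left

lemma Gp_eq_iSup (α : ℝ) (g : E → ℝ≥0∞) (x : E) :
    Gp U α g x = ⨆ N, ∑ n ∈ Finset.range N, TkIt U α g n x :=
  ENNReal.tsum_eq_iSup_nat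

/-! ### `aseq`: partial sums of the potential as a recursion -/

noncomputable def aseq (α : ℝ) (φ : E → ℝ≥0∞) : ℕ → E → ℝ≥0∞
  | 0 => fun _ => 0
  | n+1 => fun x => φ x + Tk U α (aseq α φ n) x

lemma measurable_aseq (α : ℝ) {φ : E → ℝ≥0∞} (hφ : Measurable φ) (n : ℕ) :
    Measurable (aseq U α φ n) := by
  induction n with
  | zero => exact measurable_const
  | succ n ih => exact hφ.add (measurable_Tk U α ih)

lemma aseq_eq_sum (α : ℝ) {φ : E → ℝ≥0∞} (hφ : Measurable φ) (n : ℕ) :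
    aseq U α φ n = fun x => ∑ j ∈ Finset.range n, TkIt U α φ j x := by
  induction n with
  | zero => simp [aseq]
  | succ n ih =>
      have h1 : aseq U α φ (n+1) = fun x => φ x + Tk U α (aseq U α φ n) x := rfl
      rw [h1, ih]
      ext x
      rw [Tk_sum U α (fun j => measurable_TkIt U α hφ j) (Finset.range n) x]
      rw [Finset.sum_range_succ' (fun j => TkIt U α φ j x) n]
      have : ∀ j, Tk U α (TkIt U α φ j) x = TkIt U α φ (j+1) x := fun j => rfl
      simp only [this]
      rw [add_comm]
      congr 1

lemma aseq_mono_n (α : ℝ) (φ : E → ℝ≥0∞) : ∀ n, ∀ x, aseq U α φ n x ≤ aseq U α φ (n+1) x := by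
  intro n
  induction n with
  | zero => intro x; exact zero_le
  | succ n ih =>
      intro x
      have h1 : aseq U α φ (n+1) x = φ x + Tk U α (aseq U α φ n) x := rfl
      have h2 : aseq U α φ (n+2) x = φ x + Tk U α (aseq U α φ (n+1)) x := rfl
      rw [h1, h2]
      exact add_le_add le_rfl (Tk_mono U α (fun y => ih y) x)

lemma aseq_monotone (α : ℝ) (φ : E → ℝ≥0∞) (x : E) : Monotone fun n => aseq U α φ n x :=
  monotone_nat_of_le_succ fun n => aseq_mono_n U α φ n x

lemma iSup_aseq (α : ℝ) {φ : E → ℝ≥0∞} (hφ : Measurable φ) (x : E) :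
    (⨆ n, aseq U α φ n x) = Gp U α φ x := by
  rw [Gp_eq_iSup]
  congr 1
  ext n
  rw [aseq_eq_sum U α hφ n]


/-! ### Sub-invariance of the excessive measure -/

lemma lint_Tk_le {ξ : Measure E} (hξ : IsExcessiveMeas U ξ) {α : ℝ} (hα : 0 < α)
    {g : E → ℝ≥0∞} (hg : Measurable g) :
    ∫⁻ x, Tk U α g x ∂ξ ≤ ∫⁻ x, g x ∂ξ := by
  have h1 : ∫⁻ x, Tk U α g x ∂ξ = ENNReal.ofReal α * ∫⁻ x, resOp U α g x ∂ξ :=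
    lintegral_const_mul _ (measurable_resOp U α hg)
  have h2 : ∫⁻ x, resOp U α g x ∂ξ = ∫⁻ y, g y ∂(ξ.bind (U α)) :=
    (Measure.lintegral_bind (U α).measurable.aemeasurable hg.aemeasurable).symm
  have h3 : ENNReal.ofReal α * ∫⁻ y, g y ∂(ξ.bind (U α))
      = ∫⁻ y, g y ∂(ENNReal.ofReal α • ξ.bind (U α)) := by
    rw [lintegral_smul_measure, smul_eq_mul]
  rw [h1, h2, h3]
  exact lintegral_mono' (hξ α hα) le_rfl

lemma lint_aseq_ne_top {ξ : Measure E} (hξ : IsExcessiveMeas U ξ) {α : ℝ} (hα : 0 < α)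
    {φ : E → ℝ≥0∞} (hφ : Measurable φ) (hφ1 : ∫⁻ x, φ x ∂ξ ≠ ⊤) (n : ℕ) :
    ∫⁻ x, aseq U α φ n x ∂ξ ≠ ⊤ := by
  induction n with
  | zero => simp [aseq]
  | succ n ih =>
      have h1 : ∫⁻ x, aseq U α φ (n+1) x ∂ξ
          = ∫⁻ x, φ x ∂ξ + ∫⁻ x, Tk U α (aseq U α φ n) x ∂ξ := by
        have : aseq U α φ (n+1) = fun x => φ x + Tk U α (aseq U α φ n) x := rfl
        rw [this]
        exact lintegral_add_left hφ _
      rw [h1]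
      exact ENNReal.add_ne_top.2 ⟨hφ1,
        fun h => ih (top_le_iff.1 (h ▸ lint_Tk_le U hξ hα (measurable_aseq U α hφ n)))⟩

/-! ### First-entrance maximum principle -/

noncomputable def qseq (α : ℝ) (B : Set E) : ℕ → E → ℝ≥0∞
  | 0 => fun _ => 0
  | n+1 => fun x => Tk U α (B.indicator 1) x + Tk U α (Bᶜ.indicator (qseq α B n)) x

lemma measurable_qseq (α : ℝ) {B : Set E} (hB : MeasurableSet B) (n : ℕ) :
    Measurable (qseq U α B n) := by
  induction n with
  | zero => exact measurable_const
  | succ n ih =>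
      exact (measurable_Tk U α (measurable_one.indicator hB)).add
        (measurable_Tk U α (ih.indicator hB.compl))

lemma qseq_le_one (hU : IsSubMarkovResolvent U) {α : ℝ} (hα : 0 < α)
    {B : Set E} (hB : MeasurableSet B) (n : ℕ) (x : E) :
    qseq U α B n x ≤ 1 := by
  induction n generalizing x with
  | zero => exact zero_le
  | succ n ih =>
      have h1 : qseq U α B (n+1) x
          = Tk U α (B.indicator 1) x + Tk U α (Bᶜ.indicator (qseq U α B n)) x := rfl
      rw [h1]
      have h2 : Tk U α (B.indicator 1) x + Tk U α (Bᶜ.indicator (qseq U α B n)) x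
          = Tk U α (fun y => B.indicator 1 y + Bᶜ.indicator (qseq U α B n) y) x :=
        (Tk_add U α (measurable_one.indicator hB) x).symm
      rw [h2]
      refine Tk_le_one U hU hα (fun y => ?_) x
      by_cases hy : y ∈ B
      · simp [Set.indicator_of_mem hy, Set.indicator_of_notMem (by simp [hy] : y ∉ Bᶜ)]
      · simp only [Set.indicator_of_notMem hy, zero_add,
          Set.indicator_of_mem (Set.mem_compl hy)]
        exact ih y

/-- First-entrance bound: if `Gp f ≤ k` on `B`, then the potential of `f·1_B` is
bounded by `f·1_B + k` everywhere. -/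
lemma Gp_indicator_le (hU : IsSubMarkovResolvent U) {α : ℝ} (hα : 0 < α)
    {f : E → ℝ≥0∞} (hf : Measurable f) {B : Set E} (hB : MeasurableSet B) {k : ℝ≥0∞}
    (hBk : ∀ x ∈ B, Gp U α f x ≤ k) (x : E) :
    Gp U α (B.indicator f) x ≤ B.indicator f x + k := by
  set h : E → ℝ≥0∞ := B.indicator f with hh
  have hhm : Measurable h := hf.indicator hB
  have hhf : ∀ y, h y ≤ f y := fun y => Set.indicator_le_self _ _ y
  -- partial sums
  set u : ℕ → E → ℝ≥0∞ := fun N x => ∑ n ∈ Finset.range N, TkIt U α h n x with hu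
  have humeas : ∀ N, Measurable (u N) := fun N =>
    Finset.measurable_sum _ (fun n _ => measurable_TkIt U α hhm n)
  have huB : ∀ N, ∀ y ∈ B, u N y ≤ k := by
    intro N y hy
    calc u N y ≤ Gp U α h y := ENNReal.sum_le_tsum _
    _ ≤ Gp U α f y := Gp_mono U α hhf y
    _ ≤ k := hBk y hy
  have husucc : ∀ N x, u (N+1) x = h x + Tk U α (u N) x := by
    intro N x
    rw [hu]
    simp only
    rw [Finset.sum_range_succ' (fun n => TkIt U α h n x) N]
    have h2 : ∀ j, TkIt U α h (j+1) x = Tk U α (TkIt U α h j) x := fun j => rfl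
    simp only [h2]
    rw [← Tk_sum U α (fun j => measurable_TkIt U α hhm j) (Finset.range N) x]
    have h3 : TkIt U α h 0 x = h x := rfl
    rw [h3, add_comm]
  have hkey : ∀ N x, u N x ≤ h x + k * qseq U α B N x := by
    intro N
    induction N with
    | zero => intro x; simp [hu]
    | succ N ih =>
        intro x
        rw [husucc N x]
        have hsplit : Tk U α (u N) x
            = Tk U α (B.indicator (u N)) x + Tk U α (Bᶜ.indicator (u N)) x :=
          Tk_split U α B ((humeas N).indicator hB) x
        have hB1 : Tk U α (B.indicator (u N)) x ≤ k * Tk U α (B.indicator 1) x := by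
          rw [← Tk_cmul U α k (measurable_one.indicator hB) x]
          refine Tk_mono U α (fun y => ?_) x
          by_cases hy : y ∈ B
          · rw [Set.indicator_of_mem hy, Set.indicator_of_mem hy]
            simpa using huB N y hy
          · simp [Set.indicator_of_notMem hy]
        have hB2 : Tk U α (Bᶜ.indicator (u N)) x
            ≤ k * Tk U α (Bᶜ.indicator (qseq U α B N)) x := by
          rw [← Tk_cmul U α k ((measurable_qseq U α hB N).indicator hB.compl) x]
          refine Tk_mono U α (fun y => ?_) x
          by_cases hy : y ∈ Bᶜ
          · rw [Set.indicator_of_mem hy, Set.indicator_of_mem hy]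
            have hyB : y ∉ B := hy
            have : h y = 0 := Set.indicator_of_notMem hyB f
            calc u N y ≤ h y + k * qseq U α B N y := ih y
            _ = k * qseq U α B N y := by rw [this, zero_add]
          · simp [Set.indicator_of_notMem hy]
        have hq : qseq U α B (N+1) x
            = Tk U α (B.indicator 1) x + Tk U α (Bᶜ.indicator (qseq U α B N)) x := rfl
        calc h x + Tk U α (u N) x
            ≤ h x + (k * Tk U α (B.indicator 1) x + k * Tk U α (Bᶜ.indicator (qseq U α B N)) x) := by
              rw [hsplit]; gcongr
          _ = h x + k * qseq U α B (N+1) x := by rw [hq]; ring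
  have hGp : Gp U α h x = ⨆ N, u N x := Gp_eq_iSup U α h x
  rw [hGp]
  refine iSup_le fun N => (hkey N x).trans ?_
  gcongr
  calc k * qseq U α B N x ≤ k * 1 := by gcongr; exact qseq_le_one U hU hα hB N x
  _ = k := mul_one k


/-! ### The maximal ergodic lemma -/

noncomputable def mN (α : ℝ) (φ ψ : E → ℝ≥0∞) (N : ℕ) : E → ℝ≥0∞ :=
  fun x => (Finset.range N).sup fun n => aseq U α φ (n+1) x - aseq U α ψ (n+1) x

lemma measurable_mN (α : ℝ) {φ ψ : E → ℝ≥0∞} (hφ : Measurable φ) (hψ : Measurable ψ)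
    (N : ℕ) : Measurable (mN U α φ ψ N) := by
  have hrw : mN U α φ ψ N
      = fun x => ⨆ n ∈ Finset.range N, (aseq U α φ (n+1) x - aseq U α ψ (n+1) x) := by
    ext x
    rw [mN, Finset.sup_eq_iSup]
  rw [hrw]
  exact Measurable.iSup fun n => Measurable.iSup fun _ =>
    (measurable_aseq U α hφ (n+1)).sub (measurable_aseq U α hψ (n+1))

lemma maxlemma {ξ : Measure E} (hU : IsSubMarkovResolvent U) {α : ℝ} (hα : 0 < α)
    (hξ : IsExcessiveMeas U ξ) {φ ψ : E → ℝ≥0∞} (hφ : Measurable φ) (hψ : Measurable ψ)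
    (hφ1 : ∫⁻ x, φ x ∂ξ ≠ ⊤) (hψ1 : ∫⁻ x, ψ x ∂ξ ≠ ⊤) (N : ℕ) :
    ∫⁻ x in {x | 0 < mN U α φ ψ N x}, ψ x ∂ξ
      ≤ ∫⁻ x in {x | 0 < mN U α φ ψ N x}, φ x ∂ξ := by
  set m : E → ℝ≥0∞ := mN U α φ ψ N with hm
  have hmmeas : Measurable m := measurable_mN U α hφ hψ N
  set EN : Set E := {x | 0 < m x} with hEN
  have hENmeas : MeasurableSet EN := measurableSet_lt measurable_const hmmeas
  have hae : ∀ᵐ x ∂ξ, ∀ n, aseq U α ψ n x < ⊤ :=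
    ae_all_iff.2 fun n => ae_lt_top (measurable_aseq U α hψ n)
      (lint_aseq_ne_top U hξ hα hψ hψ1 n)
  have hpt : ∀ᵐ x ∂ξ, x ∈ EN → m x + ψ x ≤ φ x + Tk U α m x := by
    filter_upwards [hae] with x hx hxE
    have hxE' : 0 < m x := hxE
    have hNpos : (Finset.range N).Nonempty := by
      by_contra hne
      rw [Finset.not_nonempty_iff_eq_empty] at hne
      have hz : m x = 0 := by rw [hm, mN, hne]; rfl
      rw [hz] at hxE'
      exact lt_irrefl 0 hxE'
    obtain ⟨n₀, hn₀mem, hn₀⟩ := Finset.exists_mem_eq_sup (Finset.range N) hNpos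
      (fun n => aseq U α φ (n+1) x - aseq U α ψ (n+1) x)
    have hmx : m x = aseq U α φ (n₀+1) x - aseq U α ψ (n₀+1) x := hn₀
    have hlt : aseq U α ψ (n₀+1) x < aseq U α φ (n₀+1) x := by
      rw [hmx] at hxE'
      exact tsub_pos_iff_lt.1 hxE'
    have h3 : ∀ y, aseq U α φ n₀ y ≤ aseq U α ψ n₀ y + m y := by
      intro y
      rcases n₀ with _ | n₁
      · have : aseq U α φ 0 y = 0 := rfl
        rw [this]
        exact zero_le
      · refine le_trans (le_add_tsub (a := aseq U α φ (n₁+1) y) (b := aseq U α ψ (n₁+1) y)) ?_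
        gcongr
        have hn₁ : n₁ ∈ Finset.range N := by
          rw [Finset.mem_range] at hn₀mem ⊢
          omega
        exact Finset.le_sup (f := fun n => aseq U α φ (n+1) y - aseq U α ψ (n+1) y) hn₁
    have h4 : Tk U α (aseq U α φ n₀) x ≤ Tk U α (aseq U α ψ n₀) x + Tk U α m x := by
      calc Tk U α (aseq U α φ n₀) x
          ≤ Tk U α (fun y => aseq U α ψ n₀ y + m y) x := Tk_mono U α h3 x
        _ = Tk U α (aseq U α ψ n₀) x + Tk U α m x :=
          Tk_add U α (measurable_aseq U α hψ n₀) x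
    have hstep : aseq U α φ (n₀+1) x + ψ x
        ≤ (φ x + Tk U α m x) + aseq U α ψ (n₀+1) x := by
      have h1 : aseq U α φ (n₀+1) x = φ x + Tk U α (aseq U α φ n₀) x := rfl
      have h2 : aseq U α ψ (n₀+1) x = ψ x + Tk U α (aseq U α ψ n₀) x := rfl
      rw [h1, h2]
      calc φ x + Tk U α (aseq U α φ n₀) x + ψ x
          ≤ φ x + (Tk U α (aseq U α ψ n₀) x + Tk U α m x) + ψ x := by gcongr
        _ = (φ x + Tk U α m x) + (ψ x + Tk U α (aseq U α ψ n₀) x) := by ring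
    have hfin : aseq U α ψ (n₀+1) x ≠ ⊤ := (hx (n₀+1)).ne
    have hsum : (m x + ψ x) + aseq U α ψ (n₀+1) x
        ≤ (φ x + Tk U α m x) + aseq U α ψ (n₀+1) x := by
      have hmx2 : m x + aseq U α ψ (n₀+1) x = aseq U α φ (n₀+1) x := by
        rw [hmx]
        exact tsub_add_cancel_of_le hlt.le
      calc (m x + ψ x) + aseq U α ψ (n₀+1) x
          = (m x + aseq U α ψ (n₀+1) x) + ψ x := by ring
        _ = aseq U α φ (n₀+1) x + ψ x := by rw [hmx2]
        _ ≤ (φ x + Tk U α m x) + aseq U α ψ (n₀+1) x := hstep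
    exact (ENNReal.add_le_add_iff_right hfin).1 hsum
  have hint : ∫⁻ x in EN, (m x + ψ x) ∂ξ ≤ ∫⁻ x in EN, (φ x + Tk U α m x) ∂ξ := by
    refine lintegral_mono_ae ?_
    rw [ae_restrict_iff' hENmeas]
    filter_upwards [hpt] with x hx
    exact hx
  have hzero : ∫⁻ x in ENᶜ, m x ∂ξ = 0 := by
    have : ∀ᵐ x ∂(ξ.restrict ENᶜ), m x = 0 := by
      rw [ae_restrict_iff' hENmeas.compl]
      refine Eventually.of_forall fun x hx => ?_
      have : ¬ 0 < m x := hx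
      simpa [pos_iff_ne_zero] using this
    calc ∫⁻ x in ENᶜ, m x ∂ξ = ∫⁻ _ in ENᶜ, 0 ∂ξ := lintegral_congr_ae this
    _ = 0 := lintegral_zero
  have hEq : ∫⁻ x, m x ∂ξ = ∫⁻ x in EN, m x ∂ξ := by
    rw [← lintegral_add_compl m hENmeas, hzero, add_zero]
  have hTm : ∫⁻ x in EN, Tk U α m x ∂ξ ≤ ∫⁻ x in EN, m x ∂ξ := by
    calc ∫⁻ x in EN, Tk U α m x ∂ξ ≤ ∫⁻ x, Tk U α m x ∂ξ :=
          lintegral_mono' Measure.restrict_le_self le_rfl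
      _ ≤ ∫⁻ x, m x ∂ξ := lint_Tk_le U hξ hα hmmeas
      _ = ∫⁻ x in EN, m x ∂ξ := hEq
  have hfinm : ∫⁻ x in EN, m x ∂ξ ≠ ⊤ := by
    have hmle : ∀ x, m x ≤ aseq U α φ N x := by
      intro x
      rw [hm, mN]
      refine Finset.sup_le fun n hn => ?_
      calc aseq U α φ (n+1) x - aseq U α ψ (n+1) x ≤ aseq U α φ (n+1) x := tsub_le_self
        _ ≤ aseq U α φ N x := aseq_monotone U α φ x (by rw [Finset.mem_range] at hn; omega)
    refine ne_top_of_le_ne_top (lint_aseq_ne_top U hξ hα hφ hφ1 N) ?_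
    calc ∫⁻ x in EN, m x ∂ξ ≤ ∫⁻ x, m x ∂ξ := lintegral_mono' Measure.restrict_le_self le_rfl
      _ ≤ ∫⁻ x, aseq U α φ N x ∂ξ := lintegral_mono hmle
  have hfinal : ∫⁻ x in EN, ψ x ∂ξ + ∫⁻ x in EN, m x ∂ξ
      ≤ ∫⁻ x in EN, φ x ∂ξ + ∫⁻ x in EN, m x ∂ξ := by
    calc ∫⁻ x in EN, ψ x ∂ξ + ∫⁻ x in EN, m x ∂ξ
        = ∫⁻ x in EN, (m x + ψ x) ∂ξ := by
          rw [lintegral_add_left hmmeas]; ring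
      _ ≤ ∫⁻ x in EN, (φ x + Tk U α m x) ∂ξ := hint
      _ = ∫⁻ x in EN, φ x ∂ξ + ∫⁻ x in EN, Tk U α m x ∂ξ := lintegral_add_left hφ _
      _ ≤ ∫⁻ x in EN, φ x ∂ξ + ∫⁻ x in EN, m x ∂ξ := by gcongr
  exact (ENNReal.add_le_add_iff_right hfinm).1 hfinal


lemma aseq_le_Gp (α : ℝ) {ψ : E → ℝ≥0∞} (hψ : Measurable ψ) (n : ℕ) (x : E) :
    aseq U α ψ n x ≤ Gp U α ψ x := by
  rw [aseq_eq_sum U α hψ n]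
  exact ENNReal.sum_le_tsum _

/-- The master estimate: a function `ψ` with integrable potential-comparison data
vanishes a.e. on the conservative set `[Gp f = ∞]` (where its own potential is finite). -/
lemma master {ξ : Measure E} (hU : IsSubMarkovResolvent U) {α : ℝ} (hα : 0 < α)
    (hξ : IsExcessiveMeas U ξ) {f ψ : E → ℝ≥0∞} (hf : Measurable f)
    (hfin : ∫⁻ x, f x ∂ξ ≠ ⊤) (hψ : Measurable ψ) (hψ1 : ∫⁻ x, ψ x ∂ξ ≠ ⊤) :
    ∫⁻ x in {x | Gp U α f x = ⊤} ∩ {x | Gp U α ψ x < ⊤}, ψ x ∂ξ = 0 := by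
  refine le_inv_nat_zero hfin fun j => ?_
  set ε : ℝ≥0∞ := ((j : ℝ≥0∞) + 1)⁻¹ with hε
  have hεne0 : ε ≠ 0 := by
    rw [hε]
    exact ENNReal.inv_ne_zero.2 (by simp [ENNReal.add_ne_top])
  have hεnetop : ε ≠ ⊤ := by
    rw [hε]
    exact ENNReal.inv_ne_top.2 (by simp)
  set φ : E → ℝ≥0∞ := fun x => ε * f x with hφdef
  have hφ : Measurable φ := hf.const_mul ε
  have hφ1 : ∫⁻ x, φ x ∂ξ ≠ ⊤ := by
    rw [hφdef]
    simp only
    rw [lintegral_const_mul ε hf]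
    exact ENNReal.mul_ne_top hεnetop hfin
  set EN : ℕ → Set E := fun N => {x | 0 < mN U α φ ψ N x} with hENdef
  have hENmeas : ∀ N, MeasurableSet (EN N) :=
    fun N => measurableSet_lt measurable_const (measurable_mN U α hφ hψ N)
  have hENmono : Monotone EN := by
    intro N M hNM x hx
    have h1 : mN U α φ ψ N x ≤ mN U α φ ψ M x :=
      Finset.sup_mono (Finset.range_subset_range.2 hNM)
    exact lt_of_lt_of_le hx h1
  have hsubset : {x | Gp U α f x = ⊤} ∩ {x | Gp U α ψ x < ⊤} ⊆ ⋃ N, EN N := by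
    rintro x ⟨hx1, hx2⟩
    have hx1' : Gp U α f x = ⊤ := hx1
    have hx2' : Gp U α ψ x < ⊤ := hx2
    have hsupφ : (⨆ n, aseq U α φ n x) = ⊤ := by
      rw [iSup_aseq U α hφ x]
      have : Gp U α φ x = ε * Gp U α f x := Gp_cmul U α ε hf x
      rw [this, hx1', ENNReal.mul_top hεne0]
    have hlt : Gp U α ψ x < ⨆ n, aseq U α φ n x := by
      rw [hsupφ]; exact hx2'
    obtain ⟨n₁, hn₁⟩ := lt_iSup_iff.1 hlt
    rcases n₁ with _ | n₀
    · have : aseq U α φ 0 x = 0 := rfl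
      rw [this] at hn₁
      exact absurd hn₁ (by simp)
    · refine Set.mem_iUnion.2 ⟨n₀ + 1, ?_⟩
      have hblt : aseq U α ψ (n₀+1) x < aseq U α φ (n₀+1) x :=
        lt_of_le_of_lt (aseq_le_Gp U α hψ (n₀+1) x) hn₁
      have hpos : 0 < aseq U α φ (n₀+1) x - aseq U α ψ (n₀+1) x :=
        tsub_pos_iff_lt.2 hblt
      have hle : aseq U α φ (n₀+1) x - aseq U α ψ (n₀+1) x ≤ mN U α φ ψ (n₀+1) x :=
        Finset.le_sup (f := fun n => aseq U α φ (n+1) x - aseq U α ψ (n+1) x)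
          (Finset.self_mem_range_succ n₀)
      exact lt_of_lt_of_le hpos hle
  calc ∫⁻ x in {x | Gp U α f x = ⊤} ∩ {x | Gp U α ψ x < ⊤}, ψ x ∂ξ
      ≤ ∫⁻ x in ⋃ N, EN N, ψ x ∂ξ := lintegral_mono_set hsubset
    _ = ⨆ N, ∫⁻ x in EN N, ψ x ∂ξ := by
        rw [← lintegral_indicator (MeasurableSet.iUnion hENmeas)]
        have hptw : ∀ x, (⋃ N, EN N).indicator ψ x = ⨆ N, (EN N).indicator ψ x := by
          intro x
          by_cases hx : x ∈ ⋃ N, EN N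
          · obtain ⟨N, hN⟩ := Set.mem_iUnion.1 hx
            rw [Set.indicator_of_mem hx]
            apply le_antisymm
            · exact le_iSup_of_le N (by rw [Set.indicator_of_mem hN])
            · exact iSup_le fun M => Set.indicator_le_self _ _ x
          · rw [Set.indicator_of_notMem hx]
            have : ∀ N, x ∉ EN N := fun N hN => hx (Set.mem_iUnion.2 ⟨N, hN⟩)
            simp [Set.indicator_of_notMem (this _)]
        calc ∫⁻ x, (⋃ N, EN N).indicator ψ x ∂ξ
            = ∫⁻ x, ⨆ N, (EN N).indicator ψ x ∂ξ := by
              congr 1; ext x; exact hptw x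
          _ = ⨆ N, ∫⁻ x, (EN N).indicator ψ x ∂ξ :=
              lintegral_iSup (fun N => hψ.indicator (hENmeas N))
                (fun N M hNM x => Set.indicator_le_indicator_of_subset (hENmono hNM)
                  (fun y => zero_le) x)
          _ = ⨆ N, ∫⁻ x in EN N, ψ x ∂ξ := by
              congr 1; ext N; exact lintegral_indicator (hENmeas N) ψ
    _ ≤ ((j : ℝ≥0∞) + 1)⁻¹ * ∫⁻ x, f x ∂ξ := by
        refine iSup_le fun N => ?_
        calc ∫⁻ x in EN N, ψ x ∂ξ ≤ ∫⁻ x in EN N, φ x ∂ξ :=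
              maxlemma U hU hα hξ hφ hψ hφ1 hψ1 N
          _ ≤ ∫⁻ x, φ x ∂ξ := lintegral_mono' Measure.restrict_le_self le_rfl
          _ = ((j : ℝ≥0∞) + 1)⁻¹ * ∫⁻ x, f x ∂ξ := by
              rw [hφdef]
              simp only
              rw [lintegral_const_mul ε hf, hε]


lemma TkIt_shift (α : ℝ) (g : E → ℝ≥0∞) (n : ℕ) :
    TkIt U α (Tk U α g) n = TkIt U α g (n+1) := by
  induction n with
  | zero => rfl
  | succ n ih =>
      have h1 : TkIt U α (Tk U α g) (n+1) = Tk U α (TkIt U α (Tk U α g) n) := rfl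
      rw [h1, ih]
      rfl

lemma Gp_Tk_le (α : ℝ) (g : E → ℝ≥0∞) (x : E) :
    Gp U α (Tk U α g) x ≤ Gp U α g x := by
  have h1 : Gp U α (Tk U α g) x = ∑' n, TkIt U α g (n+1) x := by
    rw [Gp]
    congr 1
    ext n
    rw [TkIt_shift]
  rw [h1, Gp]
  rw [tsum_eq_zero_add' (f := fun n => TkIt U α g n x) ENNReal.summable]
  exact self_le_add_left _ _

lemma measurableSet_D (hU : IsSubMarkovResolvent U) {f : E → ℝ≥0∞} (hf : Measurable f) :
    MeasurableSet {x | iniOp U f x < ⊤} := by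
  have h : {x | iniOp U f x < ⊤} = {x | SSer U 1 f x < ⊤} := by
    ext x
    simp only [Set.mem_setOf_eq]
    rw [iniOp_eq_SSer U hU one_pos hf x]
  rw [h]
  exact measurableSet_lt (measurable_SSer U 1 hf) measurable_const

lemma Gp_top_of_compl (hU : IsSubMarkovResolvent U) {α : ℝ} (hα : 0 < α)
    {f : E → ℝ≥0∞} (hf : Measurable f) {x : E} (hx : x ∈ {x | iniOp U f x < ⊤}ᶜ) :
    Gp U α f x = ⊤ := by
  rw [Gp_eq U hU hα hf x, ← iniOp_eq_SSer U hU hα hf x]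
  have hxt : iniOp U f x = ⊤ := by
    simp only [Set.mem_compl_iff, Set.mem_setOf_eq, not_lt, top_le_iff] at hx
    exact hx
  rw [hxt, ENNReal.mul_top (ENNReal.ofReal_pos.2 hα).ne', add_top]

lemma f_top_of_Gp_top (hU : IsSubMarkovResolvent U) {α : ℝ} (hα : 0 < α)
    {f : E → ℝ≥0∞} (hf : Measurable f) {x : E} (hx : x ∈ {x | iniOp U f x < ⊤})
    (hG : Gp U α f x = ⊤) : f x = ⊤ := by
  by_contra hfx
  have h1 : Gp U α f x = f x + ENNReal.ofReal α * SSer U α f x := Gp_eq U hU hα hf x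
  have h2 : SSer U α f x < ⊤ := by
    rw [← iniOp_eq_SSer U hU hα hf x]
    exact hx
  have h3 : ENNReal.ofReal α * SSer U α f x ≠ ⊤ :=
    ENNReal.mul_ne_top ENNReal.ofReal_ne_top h2.ne
  rw [h1] at hG
  exact (ENNReal.add_ne_top.2 ⟨hfx, h3⟩) hG

lemma lint_kernel_le {ξ : Measure E} (hξ : IsExcessiveMeas U ξ) {α : ℝ} (hα : 0 < α)
    {A : Set E} (hA : MeasurableSet A) :
    ENNReal.ofReal α * ∫⁻ x, (U α x) A ∂ξ ≤ ξ A := by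
  have h1 : ∀ x, Tk U α (A.indicator 1) x = ENNReal.ofReal α * (U α x) A := by
    intro x
    rw [Tk]
    congr 1
    exact lintegral_indicator_one hA
  have h2 := lint_Tk_le U hξ hα (g := A.indicator 1) (measurable_one.indicator hA)
  rw [lintegral_congr h1] at h2
  rw [lintegral_const_mul _ ((U α).measurable_coe hA)] at h2
  calc ENNReal.ofReal α * ∫⁻ x, (U α x) A ∂ξ ≤ ∫⁻ x, A.indicator 1 x ∂ξ := h2
  _ = ξ A := lintegral_indicator_one hA

lemma lint_kernel_null {ξ : Measure E} (hξ : IsExcessiveMeas U ξ) {α : ℝ} (hα : 0 < α)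
    {A : Set E} (hA : MeasurableSet A) (hA0 : ξ A = 0) :
    ∫⁻ x, (U α x) A ∂ξ = 0 := by
  have h := lint_kernel_le U hξ hα hA
  rw [hA0, le_zero_iff] at h
  rcases mul_eq_zero.1 h with h' | h'
  · exact absurd h' (ENNReal.ofReal_pos.2 hα).ne'
  · exact h'

lemma lint_iUnion_mono {ξ : Measure E} {S : ℕ → Set E} (hS : ∀ i, MeasurableSet (S i))
    (hmono : Monotone S) {g : E → ℝ≥0∞} (hg : Measurable g) :
    ∫⁻ x in ⋃ i, S i, g x ∂ξ = ⨆ i, ∫⁻ x in S i, g x ∂ξ := by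
  rw [← lintegral_indicator (MeasurableSet.iUnion hS)]
  have hptw : ∀ x, (⋃ i, S i).indicator g x = ⨆ i, (S i).indicator g x := by
    intro x
    by_cases hx : x ∈ ⋃ i, S i
    · obtain ⟨i, hi⟩ := Set.mem_iUnion.1 hx
      rw [Set.indicator_of_mem hx]
      apply le_antisymm
      · exact le_iSup_of_le i (by rw [Set.indicator_of_mem hi])
      · exact iSup_le fun j => Set.indicator_le_self _ _ x
    · rw [Set.indicator_of_notMem hx]
      have h0 : ∀ i, x ∉ S i := fun i hi => hx (Set.mem_iUnion.2 ⟨i, hi⟩)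
      simp [Set.indicator_of_notMem (h0 _)]
  calc ∫⁻ x, (⋃ i, S i).indicator g x ∂ξ
      = ∫⁻ x, ⨆ i, (S i).indicator g x ∂ξ := by congr 1; ext x; exact hptw x
    _ = ⨆ i, ∫⁻ x, (S i).indicator g x ∂ξ :=
        lintegral_iSup (fun i => hg.indicator (hS i))
          (fun i j hij x => Set.indicator_le_indicator_of_subset (hmono hij)
            (fun y => zero_le) x)
    _ = ⨆ i, ∫⁻ x in S i, g x ∂ξ := by
        congr 1; ext i; exact lintegral_indicator (hS i) g

lemma ind_one_le_one (S : Set E) (x : E) : S.indicator (1 : E → ℝ≥0∞) x ≤ 1 := by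
  by_cases hxS : x ∈ S
  · rw [Set.indicator_of_mem hxS]; exact le_rfl
  · rw [Set.indicator_of_notMem hxS]; exact zero_le

/-- A.e. no-return: the conservative set `Dᶜ` does not send mass into `D`. -/
lemma no_return (hU : IsSubMarkovResolvent U) {α : ℝ} (hα : 0 < α)
    {ξ : Measure E} [SigmaFinite ξ] (hξ : IsExcessiveMeas U ξ)
    {f : E → ℝ≥0∞} (hf : Measurable f) (hfpos : ∀ x, 0 < f x)
    (hfin : (∫⁻ x, f x ∂ξ) < ⊤) {B : Set E} (hB : MeasurableSet B)
    (hBD : B ⊆ {x | iniOp U f x < ⊤}) :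
    ∫⁻ x in {x | iniOp U f x < ⊤}ᶜ, (U α x) B ∂ξ = 0 := by
  set D := {x | iniOp U f x < ⊤} with hDdef
  have hD : MeasurableSet D := measurableSet_D U hU hf
  have hGmeas : Measurable (Gp U α f) := measurable_Gp U α hf
  have hGtopmeas : MeasurableSet {x | Gp U α f x = ⊤} := hGmeas (measurableSet_singleton ⊤)
  have hftopnull : ξ {x | f x = ⊤} = 0 := by
    have h := ae_lt_top hf hfin.ne
    rw [ae_iff] at h
    convert h using 2
    ext x
    simp [not_lt, top_le_iff, eq_comm]
  -- Step A: reduce to B₁ with finite potential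
  set B₁ := B ∩ {x | Gp U α f x < ⊤} with hB₁def
  have hB₁ : MeasurableSet B₁ := hB.inter (measurableSet_lt hGmeas measurable_const)
  set B₀ := B ∩ {x | Gp U α f x = ⊤} with hB₀def
  have hB₀ : MeasurableSet B₀ := hB.inter hGtopmeas
  have hB₀null : ξ B₀ = 0 := by
    refine measure_mono_null (fun x hx => ?_) hftopnull
    exact f_top_of_Gp_top U hU hα hf (hBD hx.1) hx.2
  have hB₀int : ∫⁻ x in Dᶜ, (U α x) B₀ ∂ξ = 0 := by
    refine le_antisymm ?_ (zero_le)
    calc ∫⁻ x in Dᶜ, (U α x) B₀ ∂ξ ≤ ∫⁻ x, (U α x) B₀ ∂ξ :=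
          lintegral_mono' Measure.restrict_le_self le_rfl
      _ = 0 := lint_kernel_null U hξ hα hB₀ hB₀null
  have hsplit : ∀ x, (U α x) B ≤ (U α x) B₁ + (U α x) B₀ := by
    intro x
    have hBsub : B ⊆ B₁ ∪ B₀ := by
      intro y hy
      rcases lt_or_eq_of_le (le_top : Gp U α f y ≤ ⊤) with h | h
      · exact Or.inl ⟨hy, h⟩
      · exact Or.inr ⟨hy, h⟩
    calc (U α x) B ≤ (U α x) (B₁ ∪ B₀) := measure_mono hBsub
    _ ≤ (U α x) B₁ + (U α x) B₀ := measure_union_le _ _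
  -- it suffices to handle B₁
  suffices hmain : ∫⁻ x in Dᶜ, (U α x) B₁ ∂ξ = 0 by
    refine le_antisymm ?_ (zero_le)
    calc ∫⁻ x in Dᶜ, (U α x) B ∂ξ
        ≤ ∫⁻ x in Dᶜ, ((U α x) B₁ + (U α x) B₀) ∂ξ := lintegral_mono fun x => hsplit x
      _ = ∫⁻ x in Dᶜ, (U α x) B₁ ∂ξ + ∫⁻ x in Dᶜ, (U α x) B₀ ∂ξ :=
          lintegral_add_left ((U α).measurable_coe hB₁) _
      _ = 0 := by rw [hmain, hB₀int, add_zero]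
  -- Step B: exhaust B₁ by pieces with bounded potential and f bounded below
  set Bm : ℕ → Set E := fun m =>
    B₁ ∩ {x | Gp U α f x ≤ (m : ℝ≥0∞)} ∩ {x | ((m : ℝ≥0∞) + 1)⁻¹ ≤ f x} with hBmdef
  have hBmmeas : ∀ m, MeasurableSet (Bm m) := by
    intro m
    exact (hB₁.inter (measurableSet_le hGmeas measurable_const)).inter
      (measurableSet_le measurable_const hf)
  have hBmmono : Monotone Bm := by
    intro m k hmk x hx
    have hcast : (m : ℝ≥0∞) ≤ (k : ℝ≥0∞) := by exact_mod_cast hmk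
    have h1 : x ∈ B₁ := hx.1.1
    have hGp : Gp U α f x ≤ (m : ℝ≥0∞) := hx.1.2
    have h2 : ((m : ℝ≥0∞) + 1)⁻¹ ≤ f x := hx.2
    have h3 : ((k : ℝ≥0∞) + 1)⁻¹ ≤ ((m : ℝ≥0∞) + 1)⁻¹ :=
      ENNReal.inv_le_inv.2 (by gcongr)
    exact ⟨⟨h1, le_trans hGp hcast⟩, le_trans h3 h2⟩
  have hBmunion : (⋃ m, Bm m) = B₁ := by
    apply Set.Subset.antisymm
    · exact Set.iUnion_subset fun m x hx => hx.1.1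
    · intro x hx
      obtain ⟨m₁, hm₁⟩ := ENNReal.exists_nat_gt hx.2.ne
      have hfx : f x ≠ 0 := (hfpos x).ne'
      obtain ⟨m₂, hm₂⟩ := ENNReal.exists_inv_nat_lt hfx
      refine Set.mem_iUnion.2 ⟨m₁ + m₂, ⟨⟨hx, ?_⟩, ?_⟩⟩
      · refine le_trans hm₁.le ?_
        exact_mod_cast Nat.le_add_right m₁ m₂
      · refine le_trans ?_ hm₂.le
        refine ENNReal.inv_le_inv.2 ?_
        calc ((m₂ : ℝ≥0∞)) ≤ ((m₁ + m₂ : ℕ) : ℝ≥0∞) := by exact_mod_cast Nat.le_add_left m₂ m₁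
        _ ≤ ((m₁ + m₂ : ℕ) : ℝ≥0∞) + 1 := le_self_add
  -- monotone convergence in the target set
  have hmono2 : ∀ x, (U α x) B₁ = ⨆ m, (U α x) (Bm m) := by
    intro x
    rw [← hBmunion]
    exact hBmmono.directed_le.measure_iUnion
  -- Step C: each piece has zero return flow
  have hstepC : ∀ m : ℕ, ∫⁻ x in Dᶜ, (U α x) (Bm m) ∂ξ = 0 := by
    intro m
    set δ : ℝ≥0∞ := ((m : ℝ≥0∞) + 1)⁻¹ with hδdef
    have hδ0 : δ ≠ 0 := ENNReal.inv_ne_zero.2 (by simp [ENNReal.add_ne_top])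
    have hδtop : δ ≠ ⊤ := ENNReal.inv_ne_top.2 (by simp)
    set B' := Bm m with hB'def
    have hB' : MeasurableSet B' := hBmmeas m
    have hB'Gp : ∀ x ∈ B', Gp U α f x ≤ (m : ℝ≥0∞) := fun x hx => hx.1.2
    have hB'f : ∀ x ∈ B', δ ≤ f x := fun x hx => hx.2
    set h : E → ℝ≥0∞ := B'.indicator f with hhdef
    have hh : Measurable h := hf.indicator hB'
    have hGph : ∀ y, Gp U α h y ≤ f y + (m : ℝ≥0∞) := by
      intro y
      refine (Gp_indicator_le U hU hα hf hB' hB'Gp y).trans ?_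
      exact add_le_add (Set.indicator_le_self _ _ y) le_rfl
    -- pointwise comparison of kernel measure with the potential of h
    have hUB' : ∀ x, (U α x) B' ≤ δ⁻¹ * resOp U α h x := by
      intro x
      have h1 : (U α x) B' = resOp U α (B'.indicator 1) x :=
        (lintegral_indicator_one hB').symm
      rw [h1, ← resOp_cmul U α δ⁻¹ hh x]
      refine resOp_mono U α (fun y => ?_) x
      by_cases hy : y ∈ B'
      · rw [Set.indicator_of_mem hy, hhdef, Set.indicator_of_mem hy]
        calc (1 : ℝ≥0∞) = δ⁻¹ * δ := (ENNReal.inv_mul_cancel hδ0 hδtop).symm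
        _ ≤ δ⁻¹ * f y := by gcongr; exact hB'f y hy
      · simp [Set.indicator_of_notMem hy]
    -- source exhaustion
    have hpiece : ∀ i : ℕ, ∫⁻ x in Dᶜ ∩ spanningSets ξ i, (U α x) B' ∂ξ = 0 := by
      intro i
      set S := Dᶜ ∩ spanningSets ξ i with hSdef
      have hS : MeasurableSet S := hD.compl.inter (measurableSet_spanningSets ξ i)
      have hSfin : ξ S ≠ ⊤ :=
        ((measure_mono Set.inter_subset_right).trans_lt (measure_spanningSets_lt_top ξ i)).ne
      set ψ : E → ℝ≥0∞ := fun x => S.indicator 1 x * min (Tk U α h x) 1 with hψdef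
      have hψm : Measurable ψ :=
        (measurable_one.indicator hS).mul ((measurable_Tk U α hh).min measurable_const)
      have hψleS : ∀ x, ψ x ≤ S.indicator 1 x := by
        intro x
        calc ψ x ≤ S.indicator 1 x * 1 := mul_le_mul_right (min_le_right _ _) _
        _ = S.indicator 1 x := mul_one _
      have hψ1 : ∫⁻ x, ψ x ∂ξ ≠ ⊤ := by
        refine ne_top_of_le_ne_top hSfin ?_
        calc ∫⁻ x, ψ x ∂ξ ≤ ∫⁻ x, S.indicator 1 x ∂ξ := lintegral_mono hψleS
        _ = ξ S := lintegral_indicator_one hS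
      have hψTk : ∀ x, ψ x ≤ Tk U α h x := by
        intro x
        calc ψ x ≤ 1 * min (Tk U α h x) 1 :=
              mul_le_mul_left (ind_one_le_one S x) _
        _ = min (Tk U α h x) 1 := one_mul _
        _ ≤ Tk U α h x := min_le_left _ _
      have hGψ : ∀ x, Gp U α ψ x ≤ f x + (m : ℝ≥0∞) := by
        intro x
        calc Gp U α ψ x ≤ Gp U α (Tk U α h) x := Gp_mono U α hψTk x
        _ ≤ Gp U α h x := Gp_Tk_le U α h x
        _ ≤ f x + (m : ℝ≥0∞) := hGph x
      set A₀ := {x | Gp U α f x = ⊤} ∩ {x | Gp U α ψ x < ⊤} with hA₀def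
      have hA₀ : MeasurableSet A₀ :=
        hGtopmeas.inter (measurableSet_lt (measurable_Gp U α hψm) measurable_const)
      have hmast : ∫⁻ x in A₀, ψ x ∂ξ = 0 := master U hU hα hξ hf hfin.ne hψm hψ1
      have hftop : MeasurableSet {x | f x = ⊤} := hf (measurableSet_singleton ⊤)
      have hsupp : ∀ x, ψ x ≠ 0 → x ∈ A₀ ∪ {x | f x = ⊤} := by
        intro x hψx
        have hxS : x ∈ S := by
          by_contra hxS
          rw [hψdef] at hψx
          simp only [Set.indicator_of_notMem hxS, zero_mul] at hψx
          exact hψx rfl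
        have hGtop : Gp U α f x = ⊤ := Gp_top_of_compl U hU hα hf hxS.1
        by_cases hfx : f x = ⊤
        · exact Or.inr hfx
        · refine Or.inl ⟨hGtop, ?_⟩
          refine lt_of_le_of_lt (hGψ x) ?_
          rw [lt_top_iff_ne_top]
          exact ENNReal.add_ne_top.2 ⟨hfx, by simp⟩
      have hψ0 : ∫⁻ x, ψ x ∂ξ = 0 := by
        refine le_antisymm ?_ (zero_le)
        have hle : ∀ x, ψ x ≤ A₀.indicator ψ x + ({x | f x = ⊤}).indicator ψ x := by
          intro x
          by_cases hψx : ψ x = 0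
          · rw [hψx]; exact zero_le
          · rcases hsupp x hψx with hx | hx
            · calc ψ x = A₀.indicator ψ x := (Set.indicator_of_mem hx ψ).symm
              _ ≤ _ := le_self_add
            · calc ψ x = ({x | f x = ⊤}).indicator ψ x := (Set.indicator_of_mem hx ψ).symm
              _ ≤ _ := le_add_self
        calc ∫⁻ x, ψ x ∂ξ
            ≤ ∫⁻ x, (A₀.indicator ψ x + ({x | f x = ⊤}).indicator ψ x) ∂ξ :=
              lintegral_mono hle
          _ = ∫⁻ x, A₀.indicator ψ x ∂ξ + ∫⁻ x, ({x | f x = ⊤}).indicator ψ x ∂ξ :=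
              lintegral_add_left (hψm.indicator hA₀) _
          _ = ∫⁻ x in A₀, ψ x ∂ξ + ∫⁻ x in {x | f x = ⊤}, ψ x ∂ξ := by
              rw [lintegral_indicator hA₀, lintegral_indicator hftop]
          _ ≤ 0 + ξ {x | f x = ⊤} := by
              refine add_le_add (le_of_eq hmast) ?_
              calc ∫⁻ x in {x | f x = ⊤}, ψ x ∂ξ
                  ≤ ∫⁻ _ in {x | f x = ⊤}, 1 ∂ξ := by
                    refine lintegral_mono fun x => ?_
                    calc ψ x ≤ S.indicator 1 x := hψleS x
                    _ ≤ 1 := ind_one_le_one S x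
                _ = ξ {x | f x = ⊤} := by rw [setLIntegral_const, one_mul]
          _ = 0 := by rw [hftopnull, zero_add]
      have hae0 : ∀ᵐ x ∂ξ, ψ x = 0 := by
        have := (lintegral_eq_zero_iff hψm).1 hψ0
        filter_upwards [this] with x hx
        exact hx
      have haeS : ∀ᵐ x ∂ξ, x ∈ S → (U α x) B' = 0 := by
        filter_upwards [hae0] with x hx hxS
        have h1 : S.indicator (1 : E → ℝ≥0∞) x = 1 := Set.indicator_of_mem hxS 1
        rw [hψdef] at hx
        simp only [h1, one_mul] at hx
        have h3 : Tk U α h x = 0 := by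
          by_contra h3
          have h4 : 0 < min (Tk U α h x) 1 := lt_min (pos_iff_ne_zero.2 h3) one_pos
          rw [hx] at h4
          exact lt_irrefl 0 h4
        have h5 : resOp U α h x = 0 := by
          have h6 : ENNReal.ofReal α * resOp U α h x = 0 := h3
          rcases mul_eq_zero.1 h6 with h7 | h7
          · exact absurd h7 (ENNReal.ofReal_pos.2 hα).ne'
          · exact h7
        refine le_antisymm ?_ (zero_le)
        calc (U α x) B' ≤ δ⁻¹ * resOp U α h x := hUB' x
        _ = 0 := by rw [h5, mul_zero]
      calc ∫⁻ x in S, (U α x) B' ∂ξ = ∫⁻ _ in S, 0 ∂ξ :=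
            lintegral_congr_ae ((ae_restrict_iff' hS).2 haeS)
        _ = 0 := lintegral_zero
    -- assemble the source pieces
    have hDceq : (Dᶜ : Set E) = ⋃ i, (Dᶜ ∩ spanningSets ξ i) := by
      rw [← Set.inter_iUnion, iUnion_spanningSets, Set.inter_univ]
    calc ∫⁻ x in Dᶜ, (U α x) B' ∂ξ
        = ∫⁻ x in ⋃ i, (Dᶜ ∩ spanningSets ξ i), (U α x) B' ∂ξ := by rw [← hDceq]
      _ = ⨆ i, ∫⁻ x in Dᶜ ∩ spanningSets ξ i, (U α x) B' ∂ξ := by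
          refine lint_iUnion_mono (fun i => hD.compl.inter (measurableSet_spanningSets ξ i))
            (fun i j hij => Set.inter_subset_inter_right _ (monotone_spanningSets ξ hij))
            ((U α).measurable_coe hB')
      _ = 0 := by
          simp only [hpiece]
          exact iSup_const
  -- assemble the target pieces
  calc ∫⁻ x in Dᶜ, (U α x) B₁ ∂ξ
      = ∫⁻ x in Dᶜ, ⨆ m, (U α x) (Bm m) ∂ξ := by
        refine lintegral_congr fun x => ?_
        exact hmono2 x
    _ = ⨆ m, ∫⁻ x in Dᶜ, (U α x) (Bm m) ∂ξ := by
        refine lintegral_iSup (fun m => (U α).measurable_coe (hBmmeas m)) ?_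
        intro m k hmk x
        exact measure_mono (hBmmono hmk)
    _ = 0 := by
        simp only [hstepC]
        exact iSup_const

end DCD

/-- for a `U`-excessive measure `ξ` and a strictly positive `f` with
`ξ(f) < ∞`, setting `D = [Uf < ∞]`, one has `ξ = ξ|_D + ξ|_{Dᶜ}`, the set `Dᶜ = [Uf = ∞]`
is not charged by `U_α` from points of `D`, and both restrictions are `U`-excessive. -/
theorem dissipative_conservative_decomposition
    (U : ℝ → ProbabilityTheory.Kernel E E) (hU : IsSubMarkovResolvent U)
    (ξ : Measure E) [SigmaFinite ξ] (hξ : IsExcessiveMeas U ξ)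
    (f : E → ℝ≥0∞) (hf : Measurable f) (hfpos : ∀ x, 0 < f x)
    (hfin : (∫⁻ x, f x ∂ξ) < ⊤) :
    ξ = ξ.restrict {x | iniOp U f x < ⊤} + ξ.restrict {x | iniOp U f x < ⊤}ᶜ ∧
    (∀ α : ℝ, 0 < α → ∀ x ∈ {x | iniOp U f x < ⊤},
      resOp U α ({x | iniOp U f x < ⊤}ᶜ.indicator 1) x = 0) ∧
    IsExcessiveMeas U (ξ.restrict {x | iniOp U f x < ⊤}) ∧
    IsExcessiveMeas U (ξ.restrict {x | iniOp U f x < ⊤}ᶜ) := by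
  have hD : MeasurableSet {x | iniOp U f x < ⊤} := DCD.measurableSet_D U hU hf
  set D := {x | iniOp U f x < ⊤} with hDdef
  refine ⟨(Measure.restrict_add_restrict_compl hD).symm, ?_, ?_, ?_⟩
  · intro α hα x hx
    exact DCD.absorb U hU hα hf hx
  · -- the dissipative part is excessive
    intro α hα
    rw [Measure.le_iff]
    intro A hA
    have hbind : ((ξ.restrict D).bind (U α)) A = ∫⁻ x in D, (U α x) A ∂ξ :=
      Measure.bind_apply hA (U α).measurable.aemeasurable
    rw [Measure.smul_apply, smul_eq_mul, hbind]
    have hpt : ∀ x ∈ D, (U α x) A ≤ (U α x) (A ∩ D) := by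
      intro x hx
      have h2 : (U α x) (A ∩ Dᶜ) = 0 := by
        refine le_antisymm ?_ (zero_le)
        calc (U α x) (A ∩ Dᶜ) ≤ (U α x) Dᶜ := measure_mono Set.inter_subset_right
          _ = resOp U α (Dᶜ.indicator 1) x := (lintegral_indicator_one hD.compl).symm
          _ = 0 := DCD.absorb U hU hα hf hx
      have h1 : (U α x) A ≤ (U α x) (A ∩ D) + (U α x) (A ∩ Dᶜ) := by
        calc (U α x) A ≤ (U α x) ((A ∩ D) ∪ (A ∩ Dᶜ)) := by
              refine measure_mono fun y hy => ?_
              by_cases hyD : y ∈ D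
              · exact Or.inl ⟨hy, hyD⟩
              · exact Or.inr ⟨hy, hyD⟩
          _ ≤ (U α x) (A ∩ D) + (U α x) (A ∩ Dᶜ) := measure_union_le _ _
      rw [h2, add_zero] at h1
      exact h1
    calc ENNReal.ofReal α * ∫⁻ x in D, (U α x) A ∂ξ
        ≤ ENNReal.ofReal α * ∫⁻ x in D, (U α x) (A ∩ D) ∂ξ := by
          refine mul_le_mul_right ?_ _
          refine lintegral_mono_ae ?_
          rw [ae_restrict_iff' hD]
          exact Eventually.of_forall hpt
      _ ≤ ENNReal.ofReal α * ∫⁻ x, (U α x) (A ∩ D) ∂ξ :=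
          mul_le_mul_right (lintegral_mono' Measure.restrict_le_self le_rfl) _
      _ ≤ ξ (A ∩ D) := DCD.lint_kernel_le U hξ hα (hA.inter hD)
      _ = (ξ.restrict D) A := (Measure.restrict_apply hA).symm
  · -- the conservative part is excessive
    intro α hα
    rw [Measure.le_iff]
    intro A hA
    have hbind : ((ξ.restrict Dᶜ).bind (U α)) A = ∫⁻ x in Dᶜ, (U α x) A ∂ξ :=
      Measure.bind_apply hA (U α).measurable.aemeasurable
    rw [Measure.smul_apply, smul_eq_mul, hbind]
    have hnr : ∫⁻ x in Dᶜ, (U α x) (A ∩ D) ∂ξ = 0 :=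
      DCD.no_return U hU hα hξ hf hfpos hfin (hA.inter hD) Set.inter_subset_right
    have hpt : ∀ x, (U α x) A ≤ (U α x) (A ∩ Dᶜ) + (U α x) (A ∩ D) := by
      intro x
      calc (U α x) A ≤ (U α x) ((A ∩ Dᶜ) ∪ (A ∩ D)) := by
            refine measure_mono fun y hy => ?_
            by_cases hyD : y ∈ D
            · exact Or.inr ⟨hy, hyD⟩
            · exact Or.inl ⟨hy, hyD⟩
        _ ≤ (U α x) (A ∩ Dᶜ) + (U α x) (A ∩ D) := measure_union_le _ _
    calc ENNReal.ofReal α * ∫⁻ x in Dᶜ, (U α x) A ∂ξ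
        ≤ ENNReal.ofReal α *
            (∫⁻ x in Dᶜ, (U α x) (A ∩ Dᶜ) ∂ξ + ∫⁻ x in Dᶜ, (U α x) (A ∩ D) ∂ξ) := by
          refine mul_le_mul_right ?_ _
          calc ∫⁻ x in Dᶜ, (U α x) A ∂ξ
              ≤ ∫⁻ x in Dᶜ, ((U α x) (A ∩ Dᶜ) + (U α x) (A ∩ D)) ∂ξ :=
                lintegral_mono fun x => hpt x
            _ = _ := lintegral_add_left ((U α).measurable_coe (hA.inter hD.compl)) _
      _ = ENNReal.ofReal α * ∫⁻ x in Dᶜ, (U α x) (A ∩ Dᶜ) ∂ξ := by rw [hnr, add_zero]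
      _ ≤ ENNReal.ofReal α * ∫⁻ x, (U α x) (A ∩ Dᶜ) ∂ξ :=
          mul_le_mul_right (lintegral_mono' Measure.restrict_le_self le_rfl) _
      _ ≤ ξ (A ∩ Dᶜ) := DCD.lint_kernel_le U hξ hα (hA.inter hD.compl)
      _ = (ξ.restrict Dᶜ) A := (Measure.restrict_apply hA).symm
end

section
/- Let (V_α)_{α>0} be a sub-Markovian strongly continuous resolvent of contractions on L^p(E,μ), p ∈ [1,∞), P_β the cone of β-potentials (u ∈ L^p_+ with αV_{β+α}u ≤ u for all α>0), and R_β the réduite operator on P_β. If 0 < β < β' and u ∈ P_{β'}, then v = u + (β'−β)V_β u belongs to P_β, and for any increasing sequence u_n ↗ u in P_{β'}, setting v_n = u_n + (β'−β)V_β u, one has v_n ∈ P_β, v_n ↗ v, and R_{β'}(u−u_n) = R_{β'}(v−v_n) ≤ R_β(v−v_n). -/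
open MeasureTheory Filter ENNReal

variable {E : Type*} [MeasurableSpace E] {μ : MeasureTheory.Measure E}
  {p : ℝ≥0∞} [Fact (1 ≤ p)]

/-- A sub-Markovian strongly continuous resolvent of contractions on `L^p(E,μ)`:
positivity preserving, `α V_α` contractions, resolvent equation, sub-Markov property,
and strong continuity `α V_α f → f`. -/
def IsSubMarkovLpResolvent (V : ℝ → Lp ℝ p μ →L[ℝ] Lp ℝ p μ) : Prop :=
  (∀ α : ℝ, 0 < α → ∀ f : Lp ℝ p μ, 0 ≤ f → 0 ≤ V α f) ∧
  (∀ α : ℝ, 0 < α → ∀ f : Lp ℝ p μ, ‖α • V α f‖ ≤ ‖f‖) ∧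
  (∀ α β : ℝ, 0 < α → 0 < β → V α - V β = (β - α) • ((V α).comp (V β))) ∧
  (∀ α : ℝ, 0 < α → ∀ f : Lp ℝ p μ, 0 ≤ f → (∀ᵐ x ∂μ, f x ≤ 1) →
    ∀ᵐ x ∂μ, α * (V α f) x ≤ 1) ∧
  (∀ f : Lp ℝ p μ, Tendsto (fun α : ℝ => α • V α f) atTop (nhds f))

/-- `u` is a `β`-potential: `u ≥ 0` and `α V_{β+α} u ≤ u` for all `α > 0`. -/
def IsPotentialLp (V : ℝ → Lp ℝ p μ →L[ℝ] Lp ℝ p μ) (β : ℝ) (u : Lp ℝ p μ) : Prop :=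
  0 ≤ u ∧ ∀ α : ℝ, 0 < α → α • (V (β + α)) u ≤ u

/-- `r` is the réduite `R_β w`: the least `β`-potential dominating `w`. -/
def IsReduiteLp (V : ℝ → Lp ℝ p μ →L[ℝ] Lp ℝ p μ) (β : ℝ) (w r : Lp ℝ p μ) : Prop :=
  IsPotentialLp V β r ∧ w ≤ r ∧ ∀ v : Lp ℝ p μ, IsPotentialLp V β v → w ≤ v → r ≤ v

/-- `u` is a regular `β`-potential: for every increasing sequence `u_n ↗ u` of
`β`-potentials, the réduites `R_β(u - u_n)` decrease to `0`. -/
def IsRegularPotLp (V : ℝ → Lp ℝ p μ →L[ℝ] Lp ℝ p μ) (β : ℝ) (u : Lp ℝ p μ) : Prop :=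
  IsPotentialLp V β u ∧ ∀ un : ℕ → Lp ℝ p μ, (∀ n, IsPotentialLp V β (un n)) →
    Monotone un → IsLUB (Set.range un) u →
    ∀ r : ℕ → Lp ℝ p μ, (∀ n, IsReduiteLp V β (u - un n) (r n)) →
      IsGLB (Set.range r) 0

omit [Fact (1 ≤ p)] in
lemma lp_smul_nonneg (c : ℝ) (hc : 0 ≤ c) (f : Lp ℝ p μ) (hf : 0 ≤ f) : 0 ≤ c • f := by
  rw [← Lp.coeFn_nonneg] at hf ⊢
  filter_upwards [hf, Lp.coeFn_smul c f] with x hx h2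
  rw [h2]; exact mul_nonneg hc hx

omit [Fact (1 ≤ p)] in
lemma lp_smul_le_smul {c : ℝ} (hc : 0 ≤ c) {f g : Lp ℝ p μ} (h : f ≤ g) :
    c • f ≤ c • g := by
  rw [← sub_nonneg, ← smul_sub]
  exact lp_smul_nonneg c hc _ (sub_nonneg.mpr h)

omit [Fact (1 ≤ p)] in
lemma lp_smul_nonpos {c : ℝ} (hc : c ≤ 0) {f : Lp ℝ p μ} (hf : 0 ≤ f) : c • f ≤ 0 := by
  have h := lp_smul_nonneg (-c) (by linarith) f hf
  rw [neg_smul] at h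
  exact neg_nonneg.mp h

/-- Resolvent equation applied to an element. -/
lemma resolvent_apply {V : ℝ → Lp ℝ p μ →L[ℝ] Lp ℝ p μ} (hV : IsSubMarkovLpResolvent V)
    {a b : ℝ} (ha : 0 < a) (hb : 0 < b) (f : Lp ℝ p μ) :
    V a f - V b f = (b - a) • V a (V b f) := by
  have h := hV.2.2.1 a b ha hb
  have := congrArg (fun (T : Lp ℝ p μ →L[ℝ] Lp ℝ p μ) => T f) h
  simpa using this

/-- Monotonicity of the resolvent in the index on nonnegative elements. -/
lemma resolvent_index_mono {V : ℝ → Lp ℝ p μ →L[ℝ] Lp ℝ p μ} (hV : IsSubMarkovLpResolvent V)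
    {a b : ℝ} (ha : 0 < a) (hab : a ≤ b) {f : Lp ℝ p μ} (hf : 0 ≤ f) :
    V b f ≤ V a f := by
  have hb : 0 < b := lt_of_lt_of_le ha hab
  have h := resolvent_apply hV ha hb f
  rw [← sub_nonneg, h]
  exact lp_smul_nonneg _ (by linarith) _ (hV.1 a ha _ (hV.1 b hb f hf))

/-- The cone of `β`-potentials grows with `β`. -/
lemma potential_index_mono {V : ℝ → Lp ℝ p μ →L[ℝ] Lp ℝ p μ} (hV : IsSubMarkovLpResolvent V)
    {β β' : ℝ} (hβ : 0 < β) (hββ' : β ≤ β') {u : Lp ℝ p μ}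
    (hu : IsPotentialLp V β u) : IsPotentialLp V β' u := by
  refine ⟨hu.1, fun α hα => ?_⟩
  calc α • V (β' + α) u ≤ α • V (β + α) u :=
        lp_smul_le_smul hα.le (resolvent_index_mono hV (by linarith) (by linarith) hu.1)
    _ ≤ u := hu.2 α hα

/-- `V β w` is a `β`-potential for `w ≥ 0`. -/
lemma Vbeta_potential {V : ℝ → Lp ℝ p μ →L[ℝ] Lp ℝ p μ} (hV : IsSubMarkovLpResolvent V)
    {β : ℝ} (hβ : 0 < β) {w : Lp ℝ p μ} (hw : 0 ≤ w) :
    IsPotentialLp V β (V β w) := by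
  refine ⟨hV.1 β hβ w hw, fun α hα => ?_⟩
  have h := resolvent_apply hV (a := β + α) (b := β) (by linarith) hβ w
  rw [show β - (β + α) = -α by ring, neg_smul] at h
  have h2 : α • V (β + α) (V β w) = V β w - V (β + α) w := by
    rw [← neg_sub ((V (β + α)) w) ((V β) w), h, neg_neg]
  rw [h2, sub_le_self_iff]
  exact hV.1 (β + α) (by linarith) w hw

lemma potential_add {V : ℝ → Lp ℝ p μ →L[ℝ] Lp ℝ p μ} {β : ℝ} {f g : Lp ℝ p μ}
    (hf : IsPotentialLp V β f) (hg : IsPotentialLp V β g) :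
    IsPotentialLp V β (f + g) := by
  refine ⟨add_nonneg hf.1 hg.1, fun α hα => ?_⟩
  rw [map_add, smul_add]
  exact add_le_add (hf.2 α hα) (hg.2 α hα)

lemma potential_smul {V : ℝ → Lp ℝ p μ →L[ℝ] Lp ℝ p μ} {β : ℝ} {c : ℝ} (hc : 0 ≤ c)
    {f : Lp ℝ p μ} (hf : IsPotentialLp V β f) : IsPotentialLp V β (c • f) := by
  refine ⟨lp_smul_nonneg c hc f hf.1, fun α hα => ?_⟩
  rw [(V (β + α)).map_smul, smul_comm]
  exact lp_smul_le_smul hc (hf.2 α hα)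

/-- The key step: if `u` is a `β'`-potential then `u + (β'-β) • V β u` is a `β`-potential. -/
lemma potential_shift {V : ℝ → Lp ℝ p μ →L[ℝ] Lp ℝ p μ} (hV : IsSubMarkovLpResolvent V)
    {β β' : ℝ} (hβ : 0 < β) (hββ' : β < β') {u : Lp ℝ p μ}
    (hu : IsPotentialLp V β' u) :
    IsPotentialLp V β (u + (β' - β) • V β u) := by
  have hVβu : 0 ≤ V β u := hV.1 β hβ u hu.1
  refine ⟨add_nonneg hu.1 (lp_smul_nonneg _ (by linarith) _ hVβu), fun α hα => ?_⟩
  have hres := resolvent_apply hV (a := β + α) (b := β) (by linarith) hβ u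
  -- α • V (β+α) (V β u) = V β u - V (β+α) u
  rw [show β - (β + α) = -α by ring, neg_smul] at hres
  have h2 : α • V (β + α) (V β u) = V β u - V (β + α) u := by
    rw [← neg_sub ((V (β + α)) u) ((V β) u), hres, neg_neg]
  have expand : α • V (β + α) (u + (β' - β) • V β u)
      = (α - (β' - β)) • V (β + α) u + (β' - β) • V β u := by
    rw [map_add, (V (β + α)).map_smul, smul_add, smul_comm α (β' - β), h2, smul_sub, sub_smul]
    module
  rw [expand]
  have key : (α - (β' - β)) • V (β + α) u ≤ u := by
    rcases le_or_gt (α - (β' - β)) 0 with hle | hgt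
    · exact (lp_smul_nonpos hle (hV.1 (β + α) (by linarith) u hu.1)).trans hu.1
    · have := hu.2 (α - (β' - β)) hgt
      have heq : β' + (α - (β' - β)) = β + α := by ring
      rwa [heq] at this
  exact add_le_add key le_rfl

/-- for `0 < β < β'` and a `β'`-potential `u`, `v = u + (β'-β) V_β u` is a
`β`-potential; for any increasing sequence `u_n ↗ u` of `β'`-potentials, the elements
`v_n = u_n + (β'-β) V_β u` are `β`-potentials increasing to `v`, and
`R_{β'}(u - u_n) = R_{β'}(v - v_n) ≤ R_β(v - v_n)`. -/
theorem potential_cone_comparison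
    (V : ℝ → Lp ℝ p μ →L[ℝ] Lp ℝ p μ) (hV : IsSubMarkovLpResolvent V)
    (β β' : ℝ) (hβ : 0 < β) (hββ' : β < β')
    (u : Lp ℝ p μ) (hu : IsPotentialLp V β' u)
    (un : ℕ → Lp ℝ p μ) (hun : ∀ n, IsPotentialLp V β' (un n))
    (hmono : Monotone un) (hlub : IsLUB (Set.range un) u) :
    IsPotentialLp V β (u + (β' - β) • V β u) ∧
    (∀ n, IsPotentialLp V β (un n + (β' - β) • V β u)) ∧
    Monotone (fun n => un n + (β' - β) • V β u) ∧
    IsLUB (Set.range (fun n => un n + (β' - β) • V β u)) (u + (β' - β) • V β u) ∧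
    (∀ n r, IsReduiteLp V β' (u - un n) r ↔
      IsReduiteLp V β' ((u + (β' - β) • V β u) - (un n + (β' - β) • V β u)) r) ∧
    (∀ n r' r,
      IsReduiteLp V β' ((u + (β' - β) • V β u) - (un n + (β' - β) • V β u)) r' →
      IsReduiteLp V β ((u + (β' - β) • V β u) - (un n + (β' - β) • V β u)) r →
      r' ≤ r) := by
  have hle : ∀ n, un n ≤ u := fun n => hlub.1 ⟨n, rfl⟩
  refine ⟨potential_shift hV hβ hββ' hu, ?_, ?_, ?_, ?_, ?_⟩
  · -- each v_n is a β-potential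
    intro n
    have hdecomp : un n + (β' - β) • V β u
        = (un n + (β' - β) • V β (un n)) + (β' - β) • V β (u - un n) := by
      rw [map_sub, smul_sub]; abel
    rw [hdecomp]
    exact potential_add (potential_shift hV hβ hββ' (hun n))
      (potential_smul (by linarith) (Vbeta_potential hV hβ (sub_nonneg.mpr (hle n))))
  · exact fun m n h => add_le_add_left (hmono h) _
  · constructor
    · rintro _ ⟨n, rfl⟩
      exact add_le_add_left (hle n) _
    · intro b hb
      rw [← sub_nonneg, add_comm, ← sub_sub, sub_nonneg, ← sub_nonneg]
      have : u ≤ b - (β' - β) • V β u := by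
        apply hlub.2
        rintro _ ⟨n, rfl⟩
        rw [le_sub_iff_add_le]
        exact hb ⟨n, rfl⟩
      rwa [sub_nonneg]
  · intro n r
    rw [add_sub_add_right_eq_sub]
  · intro n r' r hr' hr
    exact hr'.2.2 r (potential_index_mono hV hβ hββ'.le hr.1) hr.2.1
end
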